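/- arXiv:2307.04079 — 3 statements merged into one kernel-verified Lean document; each statement's English description precedes it below -/
import Mathlib

section
/- In a projective rectangle, any two lines that intersect in a point are coplanar, i.e., lie in a common full projective subplane (with special lines intersected with the plane). -/
/-- A projective rectangle: an incidence structure satisfying axioms (A1)-(A6). -/
structure ProjRect (Point Line : Type) where
  Incid : Point → Line → Prop
  /-- (A4) the special point. -/
  D : Point
  /-- (A1) every two distinct points lie on exactly one line. -/
  A1 : ∀ p q : Point, p ≠ q → ∃! l : Line, Incid p l ∧ Incid q l
  /-- (A2) there exist four points with no three collinear. -/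
  A2 : ∃ a b c d : Point, a ≠ b ∧ a ≠ c ∧ a ≠ d ∧ b ≠ c ∧ b ≠ d ∧ c ≠ d ∧
    (∀ l : Line, ¬(Incid a l ∧ Incid b l ∧ Incid c l)) ∧
    (∀ l : Line, ¬(Incid a l ∧ Incid b l ∧ Incid d l)) ∧
    (∀ l : Line, ¬(Incid a l ∧ Incid c l ∧ Incid d l)) ∧
    (∀ l : Line, ¬(Incid b l ∧ Incid c l ∧ Incid d l))
  /-- (A3) every line has at least three points. -/
  A3 : ∀ l : Line, ∃ p q r : Point, p ≠ q ∧ p ≠ r ∧ q ≠ r ∧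
    Incid p l ∧ Incid q l ∧ Incid r l
  /-- (A5) each special line intersects every other line in exactly one point. -/
  A5 : ∀ s l : Line, Incid D s → l ≠ s → ∃! p : Point, Incid p s ∧ Incid p l
  /-- (A6) restricted Pasch axiom. -/
  A6 : ∀ l1 l2 l3 l4 : Line, ∀ p p13 p14 p23 p24 : Point,
    ¬Incid D l1 → ¬Incid D l2 → l1 ≠ l2 → Incid p l1 → Incid p l2 → l3 ≠ l4 →
    Incid p13 l1 → Incid p13 l3 → Incid p14 l1 → Incid p14 l4 →
    Incid p23 l2 → Incid p23 l3 → Incid p24 l2 → Incid p24 l4 →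
    p13 ≠ p14 → p13 ≠ p23 → p13 ≠ p24 → p14 ≠ p23 → p14 ≠ p24 → p23 ≠ p24 →
    ∃ q : Point, Incid q l3 ∧ Incid q l4

/-- A subplane of a projective rectangle: sets of points and lines which, with the
induced incidence, form a projective plane. -/
def ProjRect.IsSubplane {Point Line : Type} (R : ProjRect Point Line)
    (P' : Set Point) (L' : Set Line) : Prop :=
  (∀ p q, p ∈ P' → q ∈ P' → p ≠ q → ∃! l, l ∈ L' ∧ R.Incid p l ∧ R.Incid q l) ∧
  (∀ l m, l ∈ L' → m ∈ L' → l ≠ m → ∃ x, x ∈ P' ∧ R.Incid x l ∧ R.Incid x m) ∧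
  (∃ a b c d, a ∈ P' ∧ b ∈ P' ∧ c ∈ P' ∧ d ∈ P' ∧
    a ≠ b ∧ a ≠ c ∧ a ≠ d ∧ b ≠ c ∧ b ≠ d ∧ c ≠ d ∧
    (∀ l ∈ L', ¬(R.Incid a l ∧ R.Incid b l ∧ R.Incid c l)) ∧
    (∀ l ∈ L', ¬(R.Incid a l ∧ R.Incid b l ∧ R.Incid d l)) ∧
    (∀ l ∈ L', ¬(R.Incid a l ∧ R.Incid c l ∧ R.Incid d l)) ∧
    (∀ l ∈ L', ¬(R.Incid b l ∧ R.Incid c l ∧ R.Incid d l)))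

/-- A subplane is full if it contains every point of each ordinary line it contains. -/
def ProjRect.IsFull {Point Line : Type} (R : ProjRect Point Line)
    (P' : Set Point) (L' : Set Line) : Prop :=
  ∀ l ∈ L', ¬R.Incid R.D l → ∀ p, R.Incid p l → p ∈ P'

namespace PR
variable {Point Line : Type} (R : ProjRect Point Line)

lemma line_unique {x y : Point} {l l' : Line} (hxy : x ≠ y)
    (h1 : R.Incid x l) (h2 : R.Incid y l) (h3 : R.Incid x l') (h4 : R.Incid y l') :
    l = l' := by
  obtain ⟨m, _, hu⟩ := R.A1 x y hxy
  rw [hu l ⟨h1, h2⟩, hu l' ⟨h3, h4⟩]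

lemma inter_unique {z z' : Point} {l l' : Line} (hll : l ≠ l')
    (h1 : R.Incid z l) (h2 : R.Incid z l') (h3 : R.Incid z' l) (h4 : R.Incid z' l') :
    z = z' := by
  by_contra hzz
  exact hll (line_unique R hzz h1 h3 h2 h4)

lemma join {x y : Point} (hxy : x ≠ y) : ∃ l, R.Incid x l ∧ R.Incid y l := by
  obtain ⟨m, hm, _⟩ := R.A1 x y hxy; exact ⟨m, hm⟩

lemma special_meet {s : Line} (hs : R.Incid R.D s) (l : Line) (h : l ≠ s) :
    ∃ x, R.Incid x s ∧ R.Incid x l := by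
  obtain ⟨x, hx, _⟩ := R.A5 s l hs h; exact ⟨x, hx⟩

/-- two distinct points on a line, both different from a given point -/
lemma pts_ne (l : Line) (z : Point) :
    ∃ x y, x ≠ y ∧ x ≠ z ∧ y ≠ z ∧ R.Incid x l ∧ R.Incid y l := by
  obtain ⟨p, q, r, hpq, hpr, hqr, hp, hq, hr⟩ := R.A3 l
  by_cases h1 : p = z
  · exact ⟨q, r, hqr, fun h => hpq (h1 ▸ h.symm ▸ rfl), fun h => hpr (h1 ▸ h.symm ▸ rfl), hq, hr⟩
  · by_cases h2 : q = z
    · exact ⟨p, r, hpr, h1, fun h => hqr (h2 ▸ h.symm ▸ rfl), hp, hr⟩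
    · exact ⟨p, q, hpq, h1, h2, hp, hq⟩

/-- a point not on a given line -/
lemma pt_off (l : Line) : ∃ x, ¬R.Incid x l := by
  obtain ⟨a, b, c, d, _, _, _, _, _, _, h1, _, _, _⟩ := R.A2
  by_cases ha : R.Incid a l
  · by_cases hb : R.Incid b l
    · exact ⟨c, fun hc => h1 l ⟨ha, hb, hc⟩⟩
    · exact ⟨b, hb⟩
  · exact ⟨a, ha⟩

/-- a point on l but not on l' (for l ≠ l') -/
lemma pt_on_off {l l' : Line} (h : l ≠ l') : ∃ x, R.Incid x l ∧ ¬R.Incid x l' := by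
  obtain ⟨p, q, r, hpq, hpr, hqr, hp, hq, hr⟩ := R.A3 l
  by_cases h1 : R.Incid p l'
  · by_cases h2 : R.Incid q l'
    · exact absurd (line_unique R hpq hp hq h1 h2) h
    · exact ⟨q, hq, h2⟩
  · exact ⟨p, hp, h1⟩

/-- a point off two given lines -/
lemma pt_off₂ (u v : Line) : ∃ x, ¬R.Incid x u ∧ ¬R.Incid x v := by
  by_cases huv : u = v
  · obtain ⟨x, hx⟩ := pt_off R u
    exact ⟨x, hx, huv ▸ hx⟩
  · obtain ⟨u1, hu1, hu1v⟩ := pt_on_off R huv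
    obtain ⟨v1, hv1, hv1u⟩ := pt_on_off R (Ne.symm huv)
    have huv1 : u1 ≠ v1 := fun h => hu1v (h ▸ hv1)
    obtain ⟨j, hju, hjv⟩ := join R huv1
    have hju' : j ≠ u := fun h => hv1u (h ▸ hjv)
    have hjv' : j ≠ v := fun h => hu1v (h ▸ hju)
    -- a third point on j distinct from u1 and v1
    obtain ⟨x, y, hxy, hxu1, hyu1, hx, hy⟩ := pts_ne R j u1
    by_cases hxv1 : x = v1
    · refine ⟨y, ?_, ?_⟩
      · intro hyu
        exact hyu1 (inter_unique R hju' hy hyu hju hu1)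
      · intro hyv
        have hyv1 : y ≠ v1 := fun h => hxy (hxv1 ▸ h ▸ rfl)
        exact hyv1 (inter_unique R hjv' hy hyv hjv hv1)
    · refine ⟨x, ?_, ?_⟩
      · intro hxu
        exact hxu1 (inter_unique R hju' hx hxu hju hu1)
      · intro hxv
        exact hxv1 (inter_unique R hjv' hx hxv hjv hv1)

/-- there is an ordinary line -/
lemma exists_ordinary : ∃ u : Line, ¬R.Incid R.D u := by
  obtain ⟨a, b, c, d, hab, hac, _, hbc, _, _, h1, _, _, _⟩ := R.A2
  obtain ⟨j, hja, hjb⟩ := join R hab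
  by_cases hDj : R.Incid R.D j
  · by_cases haD : a = R.D
    · obtain ⟨k, hkb, hkc⟩ := join R hbc
      by_cases hDk : R.Incid R.D k
      · exact absurd ⟨haD ▸ hDk, hkb, hkc⟩ (h1 k)
      · exact ⟨k, hDk⟩
    · obtain ⟨k, hka, hkc⟩ := join R hac
      by_cases hDk : R.Incid R.D k
      · have : j = k := line_unique R haD hja hDj hka hDk
        exact absurd ⟨hja, hjb, this ▸ hkc⟩ (h1 j)
      · exact ⟨k, hDk⟩
  · exact ⟨j, hDj⟩

/-- given an ordinary line, there is another ordinary line meeting it -/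
lemma exists_second_ordinary {a : Line} (ha : ¬R.Incid R.D a) :
    ∃ b x, ¬R.Incid R.D b ∧ a ≠ b ∧ R.Incid x a ∧ R.Incid x b := by
  obtain ⟨x, _, _, _, _, _, hx, _, _⟩ := R.A3 a
  have hxD : x ≠ R.D := fun h => ha (h ▸ hx)
  obtain ⟨s, hxs, hDs⟩ := join R hxD
  obtain ⟨z, hza, hzs⟩ := pt_off₂ R a s
  have hxz : x ≠ z := fun h => hza (h ▸ hx)
  obtain ⟨b, hxb, hzb⟩ := join R hxz
  refine ⟨b, x, ?_, ?_, hx, hxb⟩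
  · intro hDb
    exact hzs ((line_unique R hxD hxb hDb hxs hDs) ▸ hzb)
  · intro h
    exact hza (h ▸ hzb)


/-- cross lines of the plane spanned by ordinary lines a,b meeting at p:
ordinary lines meeting a and b away from p. -/
def Crossl (R : ProjRect Point Line) (a b : Line) (p : Point) (m : Line) : Prop :=
  ¬R.Incid R.D m ∧ (∃ x, x ≠ p ∧ R.Incid x a ∧ R.Incid x m) ∧
    (∃ y, y ≠ p ∧ R.Incid y b ∧ R.Incid y m)

/-- ordinary lines through p which meet some cross line away from p. -/
def Tll (R : ProjRect Point Line) (a b : Line) (p : Point) (n : Line) : Prop :=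
  ¬R.Incid R.D n ∧ R.Incid p n ∧
    ∃ q, q ≠ p ∧ R.Incid q n ∧ ∃ m, Crossl R a b p m ∧ R.Incid q m

/-- configuration: two distinct ordinary lines a, b meeting at p -/
structure Cfg (R : ProjRect Point Line) (a b : Line) (p : Point) : Prop where
  ha : ¬R.Incid R.D a
  hb : ¬R.Incid R.D b
  hab : a ≠ b
  hpa : R.Incid p a
  hpb : R.Incid p b

variable {R}

namespace Cfg
variable {a b : Line} {p : Point} (hc : Cfg R a b p)
include hc

lemma symm : Cfg R b a p := ⟨hc.hb, hc.ha, hc.hab.symm, hc.hpb, hc.hpa⟩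

/-- p is the only common point of a and b -/
lemma only_p {z : Point} (hza : R.Incid z a) (hzb : R.Incid z b) : z = p :=
  inter_unique R hc.hab hza hzb hc.hpa hc.hpb

set_option linter.unusedSectionVars false in
lemma cross_symm {m : Line} (hm : Crossl R a b p m) : Crossl R b a p m :=
  ⟨hm.1, hm.2.2, hm.2.1⟩

/-- cross lines avoid p -/
lemma cross_not_p {m : Line} (hm : Crossl R a b p m) : ¬R.Incid p m := by
  obtain ⟨hDm, ⟨x, hxp, hxa, hxm⟩, ⟨y, hyp, hyb, hym⟩⟩ := hm
  intro hpm
  have hma : m = a := line_unique R hxp hxm hpm hxa hc.hpa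
  exact hyp (hc.only_p (hma ▸ hym) hyb)

lemma cross_ne_a {m : Line} (hm : Crossl R a b p m) : m ≠ a :=
  fun h => hc.cross_not_p hm (h ▸ hc.hpa)

lemma cross_ne_b {m : Line} (hm : Crossl R a b p m) : m ≠ b :=
  fun h => hc.cross_not_p hm (h ▸ hc.hpb)

/-- through each point of a other than p there is a cross line -/
lemma cross_through_a {x : Point} (hxa : R.Incid x a) (hxp : x ≠ p) :
    ∃ m, Crossl R a b p m ∧ R.Incid x m := by
  obtain ⟨y1, y2, hy12, hy1p, hy2p, hy1, hy2⟩ := pts_ne R b p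
  have hxy1 : x ≠ y1 := fun h => hy1p (hc.only_p (h ▸ hxa) hy1) -- x=y1 on a∩b ⇒ = p
  have hxy2 : x ≠ y2 := fun h => hy2p (hc.only_p (h ▸ hxa) hy2)
  obtain ⟨m1, hxm1, hy1m1⟩ := join R hxy1
  obtain ⟨m2, hxm2, hy2m2⟩ := join R hxy2
  by_cases hD1 : R.Incid R.D m1
  · by_cases hD2 : R.Incid R.D m2
    · have hxD : x ≠ R.D := fun h => hc.ha (h ▸ hxa)
      have h12 : m1 = m2 := line_unique R hxD hxm1 hD1 hxm2 hD2
      have hm1b : m1 = b := line_unique R hy12 hy1m1 (h12 ▸ hy2m2) hy1 hy2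
      exact absurd (hc.only_p hxa (hm1b ▸ hxm1)) hxp
    · exact ⟨m2, ⟨hD2, ⟨x, hxp, hxa, hxm2⟩, ⟨y2, hy2p, hy2, hy2m2⟩⟩, hxm2⟩
  · exact ⟨m1, ⟨hD1, ⟨x, hxp, hxa, hxm1⟩, ⟨y1, hy1p, hy1, hy1m1⟩⟩, hxm1⟩

/-- L1 : any two cross lines meet -/
lemma cross_meet {m m' : Line} (hm : Crossl R a b p m) (hm' : Crossl R a b p m') :
    ∃ z, R.Incid z m ∧ R.Incid z m' := by
  by_cases hmm : m = m'
  · obtain ⟨_, ⟨x, _, _, hxm⟩, _⟩ := hm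
    exact ⟨x, hxm, hmm ▸ hxm⟩
  obtain ⟨hDm, ⟨x, hxp, hxa, hxm⟩, ⟨y, hyp, hyb, hym⟩⟩ := hm
  obtain ⟨hDm', ⟨x', hxp', hxa', hxm'⟩, ⟨y', hyp', hyb', hym'⟩⟩ := hm'
  by_cases hxx : x = x'
  · exact ⟨x, hxm, hxx ▸ hxm'⟩
  by_cases hyy : y = y'
  · exact ⟨y, hym, hyy ▸ hym'⟩
  have hab' : ∀ u v : Point, R.Incid u a → u ≠ p → R.Incid v b → v ≠ p → u ≠ v :=
    fun u v hu hup hv _ h => hup (hc.only_p hu (h ▸ hv))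
  exact R.A6 a b m m' p x x' y y' hc.ha hc.hb hc.hab hc.hpa hc.hpb hmm
    hxa hxm hxa' hxm' hyb hym hyb' hym'
    hxx (hab' x y hxa hxp hyb hyp) (hab' x y' hxa hxp hyb' hyp')
    (hab' x' y hxa' hxp' hyb hyp) (hab' x' y' hxa' hxp' hyb' hyp') hyy

/-- L2 : a T-line meets every cross line -/
lemma t_meets_cross {n m : Line} (hn : Tll R a b p n) (hm : Crossl R a b p m) :
    ∃ z, R.Incid z n ∧ R.Incid z m := by
  obtain ⟨hDn, hpn, q, hqp, hqn, m0, hm0, hqm0⟩ := hn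
  by_cases hnm : n = m
  · exact ⟨q, hqn, hnm ▸ hqn⟩
  by_cases hqm : R.Incid q m
  · exact ⟨q, hqn, hqm⟩
  by_cases hna : n = a
  · obtain ⟨_, ⟨x, _, hxa, hxm⟩, _⟩ := hm
    exact ⟨x, hna ▸ hxa, hxm⟩
  by_cases hnb : n = b
  · obtain ⟨_, _, ⟨y, _, hyb, hym⟩⟩ := hm
    exact ⟨y, hnb ▸ hyb, hym⟩
  have hqa : ¬R.Incid q a := fun h => hna (line_unique R hqp hqn hpn h hc.hpa)
  have hqb : ¬R.Incid q b := fun h => hnb (line_unique R hqp hqn hpn h hc.hpb)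
  have hmm0 : m ≠ m0 := by
    intro h; exact hqm (h ▸ hqm0)
  obtain ⟨r, hrm, hrm0⟩ := hc.cross_meet hm hm0
  obtain ⟨hDm, ⟨x, hxp, hxa, hxm⟩, ⟨y, hyp, hyb, hym⟩⟩ := hm
  obtain ⟨hDm0, ⟨x0, hx0p, hx0a, hx0m0⟩, ⟨y0, hy0p, hy0b, hy0m0⟩⟩ := hm0
  have hrp : r ≠ p := fun h => hc.cross_not_p ⟨hDm0, ⟨x0, hx0p, hx0a, hx0m0⟩,
    ⟨y0, hy0p, hy0b, hy0m0⟩⟩ (h ▸ hrm0)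
  have hqr : q ≠ r := fun h => hqm (h ▸ hrm)
  by_cases hrx : r = x
  · -- use aux pair (b, m0)
    have hbm0 : b ≠ m0 := (hc.cross_ne_b ⟨hDm0, ⟨x0, hx0p, hx0a, hx0m0⟩,
      ⟨y0, hy0p, hy0b, hy0m0⟩⟩).symm
    have hyr : y ≠ r := by
      intro h
      exact hyp (hc.only_p ((h.trans hrx).symm ▸ hxa) hyb)
    exact R.A6 b m0 n m y0 p y q r hc.hb hDm0 hbm0 hy0b hy0m0 hnm
      hc.hpb hpn hyb hym hqm0 hqn hrm0 hrm
      (Ne.symm hyp) (Ne.symm hqp) (Ne.symm hrp) (fun h => hqb (h ▸ hyb)) hyr hqr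
  · -- use aux pair (a, m0)
    have ham0 : a ≠ m0 := (hc.cross_ne_a ⟨hDm0, ⟨x0, hx0p, hx0a, hx0m0⟩,
      ⟨y0, hy0p, hy0b, hy0m0⟩⟩).symm
    exact R.A6 a m0 n m x0 p x q r hc.ha hDm0 ham0 hx0a hx0m0 hnm
      hc.hpa hpn hxa hxm hqm0 hqn hrm0 hrm
      (Ne.symm hxp) (Ne.symm hqp) (Ne.symm hrp) (fun h => hqa (h ▸ hxa))
      (fun h => hrx h.symm) hqr

/-- L4 : every point of a T-line other than p lies on a cross line -/
lemma t_full {n : Line} (hn : Tll R a b p n) {z : Point} (hzn : R.Incid z n)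
    (hzp : z ≠ p) : ∃ m, Crossl R a b p m ∧ R.Incid z m := by
  obtain ⟨hDn, hpn, q, hqp, hqn, m0, hm0, hqm0⟩ := hn
  by_cases hzm0 : R.Incid z m0
  · exact ⟨m0, hm0, hzm0⟩
  by_cases hza : R.Incid z a
  · exact hc.cross_through_a hza hzp
  by_cases hzb : R.Incid z b
  · exact hc.symm.cross_through_a hzb hzp |>.imp (fun m hm => ⟨hc.symm.cross_symm hm.1, hm.2⟩)
  obtain ⟨hDm0, ⟨x0, hx0p, hx0a, hx0m0⟩, ⟨y0, hy0p, hy0b, hy0m0⟩⟩ := hm0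
  have hm0' : Crossl R a b p m0 := ⟨hDm0, ⟨x0, hx0p, hx0a, hx0m0⟩, ⟨y0, hy0p, hy0b, hy0m0⟩⟩
  have hnm0 : n ≠ m0 := fun h => hc.cross_not_p hm0' (h ▸ hpn)
  have hzx0 : z ≠ x0 := fun h => hza (h ▸ hx0a)
  have hzy0 : z ≠ y0 := fun h => hzb (h ▸ hy0b)
  -- c1 := join z x0 meets b; c2 := join z y0 meets a
  obtain ⟨c1, hzc1, hx0c1⟩ := join R hzx0
  obtain ⟨c2, hzc2, hy0c2⟩ := join R hzy0
  have hx0y0 : x0 ≠ y0 := fun h => hx0p (hc.only_p hx0a (h ▸ hy0b))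
  have hc1b : c1 ≠ b := fun h => hzb (h ▸ hzc1)
  have hc2a : c2 ≠ a := fun h => hza (h ▸ hzc2)
  -- n and m0 meet at q
  have key1 : ∃ w, R.Incid w c1 ∧ R.Incid w b :=
    R.A6 n m0 c1 b q z p x0 y0 hDn hDm0 hnm0 hqn hqm0 hc1b
      hzn hzc1 hpn hc.hpb hx0m0 hx0c1 hy0m0 hy0b
      hzp hzx0 hzy0 (fun h => hx0p h.symm) (fun h => hy0p h.symm) hx0y0
  have key2 : ∃ v, R.Incid v c2 ∧ R.Incid v a :=
    R.A6 n m0 c2 a q z p y0 x0 hDn hDm0 hnm0 hqn hqm0 hc2a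
      hzn hzc2 hpn hc.hpa hy0m0 hy0c2 hx0m0 hx0a
      hzp hzy0 hzx0 (fun h => hy0p h.symm) (fun h => hx0p h.symm) (Ne.symm hx0y0)
  obtain ⟨w, hwc1, hwb⟩ := key1
  obtain ⟨v, hvc2, hva⟩ := key2
  have hwp : w ≠ p := by
    intro h
    -- then c1 contains p and x0, so c1 = a, so z ∈ a
    have : c1 = a := line_unique R hx0p hx0c1 (h ▸ hwc1) hx0a hc.hpa
    exact hza (this ▸ hzc1)
  have hvp : v ≠ p := by
    intro h
    have : c2 = b := line_unique R hy0p hy0c2 (h ▸ hvc2) hy0b hc.hpb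
    exact hzb (this ▸ hzc2)
  -- at most one of c1, c2 is special
  have hc12 : c1 ≠ c2 := by
    intro h
    have : c1 = m0 := line_unique R hx0y0 hx0c1 (h ▸ hy0c2) hx0m0 hy0m0
    exact hzm0 (this ▸ hzc1)
  by_cases hDc1 : R.Incid R.D c1
  · refine ⟨c2, ⟨?_, ⟨v, hvp, hva, hvc2⟩, ⟨y0, hy0p, hy0b, hy0c2⟩⟩, hzc2⟩
    intro hDc2
    have hzD : z ≠ R.D := fun h => hDn (h ▸ hzn)
    exact hc12 (line_unique R hzD hzc1 hDc1 hzc2 hDc2)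
  · exact ⟨c1, ⟨hDc1, ⟨x0, hx0p, hx0a, hx0c1⟩, ⟨w, hwp, hwb, hwc1⟩⟩, hzc1⟩

/-- bootstrap: a line with a point on a and a plane point off a,b also meets b -/
lemma half {n m : Line} {v q : Point} (hpn : ¬R.Incid p n)
    (hva : R.Incid v a) (hvn : R.Incid v n) (hm : Crossl R a b p m)
    (hqn : R.Incid q n) (hqm : R.Incid q m)
    (hqa : ¬R.Incid q a) (hqb : ¬R.Incid q b) :
    ∃ w, R.Incid w n ∧ R.Incid w b := by
  obtain ⟨hDm, ⟨xm, hxmp, hxma, hxmm⟩, ⟨ym, hymp, hymb, hymm⟩⟩ := hm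
  have hm' : Crossl R a b p m := ⟨hDm, ⟨xm, hxmp, hxma, hxmm⟩, ⟨ym, hymp, hymb, hymm⟩⟩
  have hnb : n ≠ b := fun h => hpn (h ▸ hc.hpb)
  have hqp : q ≠ p := fun h => hpn (h ▸ hqn)
  have hvp : v ≠ p := fun h => hpn (h ▸ hvn)
  have hymv : ym ≠ v := fun h => hymp (hc.only_p (h ▸ hva) hymb)
  exact R.A6 m a n b xm q ym v p hDm hc.ha (hc.cross_ne_a hm') hxmm hxma hnb
    hqm hqn hymm hymb hva hvn hc.hpa hc.hpb
    (fun h => hqb (h ▸ hymb)) (fun h => hqa (h ▸ hva)) hqp hymv hymp hvp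

lemma half' {n m : Line} {v q : Point} (hpn : ¬R.Incid p n)
    (hvb : R.Incid v b) (hvn : R.Incid v n) (hm : Crossl R a b p m)
    (hqn : R.Incid q n) (hqm : R.Incid q m)
    (hqa : ¬R.Incid q a) (hqb : ¬R.Incid q b) :
    ∃ w, R.Incid w n ∧ R.Incid w a :=
  hc.symm.half hpn hvb hvn (hc.cross_symm hm) hqn hqm hqb hqa

/-- closure: an ordinary line avoiding p through two plane points is a cross line -/
lemma closure {n : Line} (hDn : ¬R.Incid R.D n) (hpn : ¬R.Incid p n) {q1 q2 : Point}
    (h12 : q1 ≠ q2) (h1n : R.Incid q1 n) (h2n : R.Incid q2 n)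
    {m1 m2 : Line} (hm1 : Crossl R a b p m1) (h1m : R.Incid q1 m1)
    (hm2 : Crossl R a b p m2) (h2m : R.Incid q2 m2) :
    Crossl R a b p n := by
  have hq1p : q1 ≠ p := fun h => hpn (h ▸ h1n)
  have hq2p : q2 ≠ p := fun h => hpn (h ▸ h2n)
  by_cases hq1a : R.Incid q1 a
  · by_cases hq2a : R.Incid q2 a
    · exact absurd (line_unique R h12 h1n h2n hq1a hq2a ▸ hpn) (fun h => h hc.hpa)
    by_cases hq2b : R.Incid q2 b
    · exact ⟨hDn, ⟨q1, hq1p, hq1a, h1n⟩, ⟨q2, hq2p, hq2b, h2n⟩⟩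
    obtain ⟨w, hwn, hwb⟩ := hc.half hpn hq1a h1n hm2 h2n h2m hq2a hq2b
    exact ⟨hDn, ⟨q1, hq1p, hq1a, h1n⟩, ⟨w, fun h => hpn (h ▸ hwn), hwb, hwn⟩⟩
  by_cases hq1b : R.Incid q1 b
  · by_cases hq2b : R.Incid q2 b
    · exact absurd (line_unique R h12 h1n h2n hq1b hq2b ▸ hpn) (fun h => h hc.hpb)
    by_cases hq2a : R.Incid q2 a
    · exact ⟨hDn, ⟨q2, hq2p, hq2a, h2n⟩, ⟨q1, hq1p, hq1b, h1n⟩⟩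
    obtain ⟨v, hvn, hva⟩ := hc.half' hpn hq1b h1n hm2 h2n h2m hq2a hq2b
    exact ⟨hDn, ⟨v, fun h => hpn (h ▸ hvn), hva, hvn⟩, ⟨q1, hq1p, hq1b, h1n⟩⟩
  -- q1 off a and b
  by_cases hq2a : R.Incid q2 a
  · obtain ⟨w, hwn, hwb⟩ := hc.half hpn hq2a h2n hm1 h1n h1m hq1a hq1b
    exact ⟨hDn, ⟨q2, hq2p, hq2a, h2n⟩, ⟨w, fun h => hpn (h ▸ hwn), hwb, hwn⟩⟩
  by_cases hq2b : R.Incid q2 b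
  · obtain ⟨v, hvn, hva⟩ := hc.half' hpn hq2b h2n hm1 h1n h1m hq1a hq1b
    exact ⟨hDn, ⟨v, fun h => hpn (h ▸ hvn), hva, hvn⟩, ⟨q2, hq2p, hq2b, h2n⟩⟩
  -- both off a and b
  by_cases h2m1 : R.Incid q2 m1
  · have : n = m1 := line_unique R h12 h1n h2n h1m h2m1
    exact this ▸ hm1
  have hm12 : m1 ≠ m2 := fun h => h2m1 (h ▸ h2m)
  obtain ⟨r, hrm1, hrm2⟩ := hc.cross_meet hm1 hm2
  obtain ⟨hDm1, ⟨x1, hx1p, hx1a, hx1m⟩, ⟨y1, hy1p, hy1b, hy1m⟩⟩ := hm1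
  obtain ⟨hDm2, ⟨x2, hx2p, hx2a, hx2m⟩, ⟨y2, hy2p, hy2b, hy2m⟩⟩ := hm2
  have hm1' : Crossl R a b p m1 := ⟨hDm1, ⟨x1, hx1p, hx1a, hx1m⟩, ⟨y1, hy1p, hy1b, hy1m⟩⟩
  by_cases hx12 : x1 = x2
  · have hy12 : y1 ≠ y2 := by
      intro h
      have hxy : x1 ≠ y1 := fun hh => hx1p (hc.only_p hx1a (hh ▸ hy1b))
      exact hm12 (line_unique R hxy hx1m hy1m (hx12 ▸ hx2m) (h ▸ hy2m))
    have hnb : n ≠ b := fun h => hpn (h ▸ hc.hpb)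
    obtain ⟨w, hwn, hwb⟩ := R.A6 m1 m2 n b r q1 y1 q2 y2 hDm1 hDm2 hm12 hrm1 hrm2 hnb
      h1m h1n hy1m hy1b h2m h2n hy2m hy2b
      (fun h => hq1b (h ▸ hy1b)) h12 (fun h => hq1b (h ▸ hy2b))
      (fun h => hq2b (h.symm ▸ hy1b)) hy12 (fun h => hq2b (h ▸ hy2b))
    obtain ⟨v, hvn, hva⟩ := hc.half' hpn hwb hwn hm1' h1n h1m hq1a hq1b
    exact ⟨hDn, ⟨v, fun h => hpn (h ▸ hvn), hva, hvn⟩, ⟨w, fun h => hpn (h ▸ hwn), hwb, hwn⟩⟩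
  · have hna : n ≠ a := fun h => hpn (h ▸ hc.hpa)
    obtain ⟨v, hvn, hva⟩ := R.A6 m1 m2 n a r q1 x1 q2 x2 hDm1 hDm2 hm12 hrm1 hrm2 hna
      h1m h1n hx1m hx1a h2m h2n hx2m hx2a
      (fun h => hq1a (h ▸ hx1a)) h12 (fun h => hq1a (h ▸ hx2a))
      (fun h => hq2a (h.symm ▸ hx1a)) hx12 (fun h => hq2a (h ▸ hx2a))
    obtain ⟨w, hwn, hwb⟩ := hc.half hpn hva hvn hm1' h1n h1m hq1a hq1b
    exact ⟨hDn, ⟨v, fun h => hpn (h ▸ hvn), hva, hvn⟩, ⟨w, fun h => hpn (h ▸ hwn), hwb, hwn⟩⟩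

omit hc in
/-- the full subplane spanned by two intersecting ordinary lines -/
theorem main_plane {a b : Line} {p : Point} (hc : Cfg R a b p) :
    ∃ (P' : Set Point) (L' : Set Line),
      R.IsSubplane P' L' ∧ R.IsFull P' L' ∧ a ∈ L' ∧ b ∈ L' ∧
      ∀ s, R.Incid R.D s → s ∈ L' := by
  classical
  set P' : Set Point := {z | z = R.D ∨ z = p ∨ ∃ m, Crossl R a b p m ∧ R.Incid z m}
    with hP'
  set L' : Set Line := {l | R.Incid R.D l ∨ Crossl R a b p l ∨ Tll R a b p l} with hL'
  have memP_cross : ∀ {z : Point} {m : Line}, Crossl R a b p m → R.Incid z m → z ∈ P' :=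
    fun hm hz => Or.inr (Or.inr ⟨_, hm, hz⟩)
  have memP_p : p ∈ P' := Or.inr (Or.inl rfl)
  have memP_D : R.D ∈ P' := Or.inl rfl
  -- every point of a cross line or T-line is in P'
  have hfull : ∀ l : Line, Crossl R a b p l ∨ Tll R a b p l →
      ∀ z, R.Incid z l → z ∈ P' := by
    rintro l (hCl | hTl) z hz
    · exact memP_cross hCl hz
    · by_cases hzp : z = p
      · exact hzp ▸ memP_p
      · obtain ⟨m, hm, hzm⟩ := hc.t_full hTl hz hzp
        exact memP_cross hm hzm
  -- a and b are T-lines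
  have hTa : Tll R a b p a := by
    obtain ⟨x, _, _, hxp, _, hxa, _⟩ := pts_ne R a p
    obtain ⟨m, hm, hxm⟩ := hc.cross_through_a hxa hxp
    exact ⟨hc.ha, hc.hpa, x, hxp, hxa, m, hm, hxm⟩
  have hTb : Tll R a b p b := by
    obtain ⟨y, _, _, hyp, _, hyb, _⟩ := pts_ne R b p
    obtain ⟨m, hm, hym⟩ := hc.symm.cross_through_a hyb hyp
    exact ⟨hc.hb, hc.hpb, y, hyp, hyb, m, hc.symm.cross_symm hm, hym⟩
  refine ⟨P', L', ⟨?_, ?_, ?_⟩, ?_, Or.inr (Or.inr hTa), Or.inr (Or.inr hTb),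
    fun s hs => Or.inl hs⟩
  · -- joins
    intro z w hzP hwP hzw
    obtain ⟨l, hzl, hwl⟩ := join R hzw
    refine ⟨l, ⟨?_, hzl, hwl⟩, ?_⟩
    swap
    · rintro l' ⟨-, hzl', hwl'⟩
      exact line_unique R hzw hzl' hwl' hzl hwl
    by_cases hDl : R.Incid R.D l
    · exact Or.inl hDl
    have hzD : z ≠ R.D := fun h => hDl (h ▸ hzl)
    have hwD : w ≠ R.D := fun h => hDl (h ▸ hwl)
    rcases hzP with hzP | hzP | ⟨m1, hm1, hzm1⟩
    · exact absurd hzP hzD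
    · -- z = p
      rcases hwP with hwP | hwP | ⟨m2, hm2, hwm2⟩
      · exact absurd hwP hwD
      · exact absurd (hzP.trans hwP.symm) hzw
      · refine Or.inr (Or.inr ⟨hDl, hzP ▸ hzl, w, ?_, hwl, m2, hm2, hwm2⟩)
        intro h; exact hzw (hzP.trans h.symm ▸ rfl)
    rcases hwP with hwP | hwP | ⟨m2, hm2, hwm2⟩
    · exact absurd hwP hwD
    · refine Or.inr (Or.inr ⟨hDl, hwP ▸ hwl, z, ?_, hzl, m1, hm1, hzm1⟩)
      intro h; exact hzw (h.trans hwP.symm)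
    -- both z, w on cross lines
    by_cases hpl : R.Incid p l
    · by_cases hzp : z = p
      · refine Or.inr (Or.inr ⟨hDl, hpl, w, ?_, hwl, m2, hm2, hwm2⟩)
        intro h; exact hzw (hzp.trans h.symm)
      · exact Or.inr (Or.inr ⟨hDl, hpl, z, hzp, hzl, m1, hm1, hzm1⟩)
    · exact Or.inr (Or.inl (hc.closure hDl hpl hzw hzl hwl hm1 hzm1 hm2 hwm2))
  · -- pairwise intersections
    rintro l m (hDl | hCl | hTl) hm hlm
    · rcases hm with hDm | hCm | hTm
      · exact ⟨R.D, memP_D, hDl, hDm⟩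
      · obtain ⟨z, hzl, hzm⟩ := special_meet R hDl m (Ne.symm hlm)
        exact ⟨z, memP_cross hCm hzm, hzl, hzm⟩
      · obtain ⟨z, hzl, hzm⟩ := special_meet R hDl m (Ne.symm hlm)
        exact ⟨z, hfull m (Or.inr hTm) z hzm, hzl, hzm⟩
    · rcases hm with hDm | hCm | hTm
      · obtain ⟨z, hzm, hzl⟩ := special_meet R hDm l hlm
        exact ⟨z, memP_cross hCl hzl, hzl, hzm⟩
      · obtain ⟨z, hzl, hzm⟩ := hc.cross_meet hCl hCm
        exact ⟨z, memP_cross hCl hzl, hzl, hzm⟩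
      · obtain ⟨z, hzm, hzl⟩ := hc.t_meets_cross hTm hCl
        exact ⟨z, memP_cross hCl hzl, hzl, hzm⟩
    · rcases hm with hDm | hCm | hTm
      · obtain ⟨z, hzm, hzl⟩ := special_meet R hDm l hlm
        exact ⟨z, hfull l (Or.inr hTl) z hzl, hzl, hzm⟩
      · obtain ⟨z, hzl, hzm⟩ := hc.t_meets_cross hTl hCm
        exact ⟨z, memP_cross hCm hzm, hzl, hzm⟩
      · exact ⟨p, memP_p, hTl.2.1, hTm.2.1⟩
  · -- quadrilateral
    obtain ⟨u1, u2, hu12, hu1p, hu2p, hu1, hu2⟩ := pts_ne R a p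
    obtain ⟨v1, v2, hv12, hv1p, hv2p, hv1, hv2⟩ := pts_ne R b p
    have hne : ∀ u v : Point, R.Incid u a → u ≠ p → R.Incid v b → v ≠ p → u ≠ v :=
      fun u v hu hup hv hvp h => hup (hc.only_p hu (h ▸ hv))
    have huD : ∀ u : Point, R.Incid u a → u ≠ R.D := fun u hu h => hc.ha (h ▸ hu)
    have hvD : ∀ v : Point, R.Incid v b → v ≠ R.D := fun v hv h => hc.hb (h ▸ hv)
    obtain ⟨m11, hu1m11, hv1m11⟩ := join R (hne u1 v1 hu1 hu1p hv1 hv1p)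
    obtain ⟨m12, hu1m12, hv2m12⟩ := join R (hne u1 v2 hu1 hu1p hv2 hv2p)
    obtain ⟨m21, hu2m21, hv1m21⟩ := join R (hne u2 v1 hu2 hu2p hv1 hv1p)
    obtain ⟨m22, hu2m22, hv2m22⟩ := join R (hne u2 v2 hu2 hu2p hv2 hv2p)
    -- pick a matching of ordinary cross lines
    have matching : ∃ (x x' y y' : Point) (m1 m2 : Line),
        R.Incid x a ∧ x ≠ p ∧ R.Incid x' a ∧ x' ≠ p ∧ x ≠ x' ∧
        R.Incid y b ∧ y ≠ p ∧ R.Incid y' b ∧ y' ≠ p ∧ y ≠ y' ∧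
        Crossl R a b p m1 ∧ R.Incid x m1 ∧ R.Incid y' m1 ∧
        Crossl R a b p m2 ∧ R.Incid x' m2 ∧ R.Incid y m2 := by
      by_cases hD11 : R.Incid R.D m11
      · have hD12 : ¬R.Incid R.D m12 := by
          intro h
          have : m11 = m12 := line_unique R (huD u1 hu1) hu1m11 hD11 hu1m12 h
          have hb' : m11 = b := line_unique R hv12 hv1m11 (this ▸ hv2m12) hv1 hv2
          exact hu1p (hc.only_p hu1 (hb' ▸ hu1m11))
        have hD21 : ¬R.Incid R.D m21 := by
          intro h
          have : m11 = m21 := line_unique R (hvD v1 hv1) hv1m11 hD11 hv1m21 h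
          have ha' : m11 = a := line_unique R hu12 hu1m11 (this ▸ hu2m21) hu1 hu2
          exact hv1p (hc.only_p (ha' ▸ hv1m11) hv1)
        exact ⟨u1, u2, v1, v2, m12, m21, hu1, hu1p, hu2, hu2p, hu12,
          hv1, hv1p, hv2, hv2p, hv12,
          ⟨hD12, ⟨u1, hu1p, hu1, hu1m12⟩, ⟨v2, hv2p, hv2, hv2m12⟩⟩, hu1m12, hv2m12,
          ⟨hD21, ⟨u2, hu2p, hu2, hu2m21⟩, ⟨v1, hv1p, hv1, hv1m21⟩⟩, hu2m21, hv1m21⟩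
      by_cases hD22 : R.Incid R.D m22
      · have hD12 : ¬R.Incid R.D m12 := by
          intro h
          have : m12 = m22 := line_unique R (hvD v2 hv2) hv2m12 h hv2m22 hD22
          have ha' : m22 = a := line_unique R hu12 (this ▸ hu1m12) hu2m22 hu1 hu2
          exact hv2p (hc.only_p (ha' ▸ hv2m22) hv2)
        have hD21 : ¬R.Incid R.D m21 := by
          intro h
          have : m21 = m22 := line_unique R (huD u2 hu2) hu2m21 h hu2m22 hD22
          have hb' : m22 = b := line_unique R hv12 (this ▸ hv1m21) hv2m22 hv1 hv2
          exact hu2p (hc.only_p hu2 (hb' ▸ hu2m22))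
        exact ⟨u1, u2, v1, v2, m12, m21, hu1, hu1p, hu2, hu2p, hu12,
          hv1, hv1p, hv2, hv2p, hv12,
          ⟨hD12, ⟨u1, hu1p, hu1, hu1m12⟩, ⟨v2, hv2p, hv2, hv2m12⟩⟩, hu1m12, hv2m12,
          ⟨hD21, ⟨u2, hu2p, hu2, hu2m21⟩, ⟨v1, hv1p, hv1, hv1m21⟩⟩, hu2m21, hv1m21⟩
      · exact ⟨u1, u2, v2, v1, m11, m22, hu1, hu1p, hu2, hu2p, hu12,
          hv2, hv2p, hv1, hv1p, (Ne.symm hv12),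
          ⟨hD11, ⟨u1, hu1p, hu1, hu1m11⟩, ⟨v1, hv1p, hv1, hv1m11⟩⟩, hu1m11, hv1m11,
          ⟨hD22, ⟨u2, hu2p, hu2, hu2m22⟩, ⟨v2, hv2p, hv2, hv2m22⟩⟩, hu2m22, hv2m22⟩
    obtain ⟨x, x', y, y', m1, m2, hxa, hxp, hx'a, hx'p, hxx', hyb, hyp, hy'b, hy'p,
      hyy', hm1, hxm1, hy'm1, hm2, hx'm2, hym2⟩ := matching
    have hm12 : m1 ≠ m2 := by
      intro h
      have : m2 = a := line_unique R hxx' (h ▸ hxm1) hx'm2 hxa hx'a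
      exact hyp (hc.only_p (this ▸ hym2) hyb)
    obtain ⟨q, hqm1, hqm2⟩ := hc.cross_meet hm1 hm2
    have hpq : p ≠ q := fun h => hc.cross_not_p hm1 (h ▸ hqm1)
    have hxq : x ≠ q := by
      intro h
      exact hxx' (inter_unique R (hc.cross_ne_a hm2).symm hxa (h ▸ hqm2) hx'a hx'm2)
    have hyq : y ≠ q := by
      intro h
      exact hyy' (inter_unique R (hc.cross_ne_b hm1).symm hyb (h ▸ hqm1) hy'b hy'm1)
    have hqy' : q ≠ y' := by
      intro h
      exact hyy' (inter_unique R (hc.cross_ne_b hm2).symm hyb hym2 hy'b (h ▸ hqm2))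
    refine ⟨p, x, y, q, memP_p, memP_cross hm1 hxm1, memP_cross hm2 hym2,
      memP_cross hm1 hqm1, Ne.symm hxp, Ne.symm hyp, hpq,
      hne x y hxa hxp hyb hyp, hxq, hyq, ?_, ?_, ?_, ?_⟩
    · rintro l - ⟨hpl, hxl, hyl⟩
      have : l = a := line_unique R (Ne.symm hxp) hpl hxl hc.hpa hxa
      exact hyp (hc.only_p (this ▸ hyl) hyb)
    · rintro l - ⟨hpl, hxl, hql⟩
      have : l = a := line_unique R (Ne.symm hxp) hpl hxl hc.hpa hxa
      exact hxq (inter_unique R (hc.cross_ne_a hm1).symm hxa hxm1 (this ▸ hql) hqm1)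
    · rintro l - ⟨hpl, hyl, hql⟩
      have : l = b := line_unique R (Ne.symm hyp) hpl hyl hc.hpb hyb
      exact hqy' (inter_unique R (hc.cross_ne_b hm1).symm (this ▸ hql) hqm1 hy'b hy'm1)
    · rintro l - ⟨hxl, hyl, hql⟩
      have : l = m1 := line_unique R hxq hxl hql hxm1 hqm1
      exact hyy' (inter_unique R (hc.cross_ne_b hm1).symm hyb (this ▸ hyl) hy'b hy'm1)
  · -- fullness
    rintro l (hDl | hCl | hTl) hlord z hz
    · exact absurd hDl hlord
    · exact memP_cross hCl hz
    · exact hfull l (Or.inr hTl) z hz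

end Cfg
end PR

/-- Any two lines that intersect in a point are coplanar: they both belong (as lines,
or as intersections of special lines with the plane) to a common full subplane. -/
theorem stmt_12 {Point Line : Type} (R : ProjRect Point Line) (l1 l2 : Line)
    (hne : l1 ≠ l2) (p : Point) (hp1 : R.Incid p l1) (hp2 : R.Incid p l2) :
    ∃ (P' : Set Point) (L' : Set Line),
      R.IsSubplane P' L' ∧ R.IsFull P' L' ∧ l1 ∈ L' ∧ l2 ∈ L' := by
  by_cases hD1 : R.Incid R.D l1
  · by_cases hD2 : R.Incid R.D l2
    · -- both special : any plane works
      obtain ⟨u, hu⟩ := PR.exists_ordinary R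
      obtain ⟨v, x, hv, huv, hxu, hxv⟩ := PR.exists_second_ordinary R hu
      obtain ⟨P', L', h1, h2, _, _, h5⟩ :=
        PR.Cfg.main_plane (R := R) ⟨hu, hv, huv, hxu, hxv⟩
      exact ⟨P', L', h1, h2, h5 l1 hD1, h5 l2 hD2⟩
    · -- l2 ordinary, l1 special
      obtain ⟨v, x, hv, huv, hxu, hxv⟩ := PR.exists_second_ordinary R hD2
      obtain ⟨P', L', h1, h2, h3, _, h5⟩ :=
        PR.Cfg.main_plane (R := R) ⟨hD2, hv, huv, hxu, hxv⟩
      exact ⟨P', L', h1, h2, h5 l1 hD1, h3⟩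
  · by_cases hD2 : R.Incid R.D l2
    · obtain ⟨v, x, hv, huv, hxu, hxv⟩ := PR.exists_second_ordinary R hD1
      obtain ⟨P', L', h1, h2, h3, _, h5⟩ :=
        PR.Cfg.main_plane (R := R) ⟨hD1, hv, huv, hxu, hxv⟩
      exact ⟨P', L', h1, h2, h3, h5 l2 hD2⟩
    · -- both ordinary
      obtain ⟨P', L', h1, h2, h3, h4, _⟩ :=
        PR.Cfg.main_plane (R := R) ⟨hD1, hD2, hne, hp1, hp2⟩
      exact ⟨P', L', h1, h2, h3, h4⟩
end

section
/- In a projective rectangle, if three lines intersect pairwise in three distinct points, then they are a coplanar triple; equivalently, three pairwise intersecting lines that are not coplanar as a triple all pass through one common point. -/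
namespace ProjRect

variable {Point Line : Type}

/-- Two distinct points lie on a unique line. -/
lemma eq_line (R : ProjRect Point Line) {p q : Point} {l m : Line} (hpq : p ≠ q)
    (h1 : R.Incid p l) (h2 : R.Incid q l) (h3 : R.Incid p m) (h4 : R.Incid q m) : l = m := by
  obtain ⟨n, -, hn⟩ := R.A1 p q hpq
  rw [hn l ⟨h1, h2⟩, hn m ⟨h3, h4⟩]

/-- Two distinct lines meet in at most one point. -/
lemma eq_pt (R : ProjRect Point Line) {l m : Line} {x y : Point} (hlm : l ≠ m)
    (h1 : R.Incid x l) (h2 : R.Incid x m) (h3 : R.Incid y l) (h4 : R.Incid y m) : x = y := by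
  by_contra h
  exact hlm (R.eq_line h h1 h3 h2 h4)

/-- Ordinary transversal of the base pair (a,b) with center C. -/
def OrdT (R : ProjRect Point Line) (a b : Line) (C : Point) (t : Line) : Prop :=
  ¬R.Incid R.D t ∧ ∃ X Y, R.Incid X a ∧ R.Incid X t ∧ X ≠ C ∧
    R.Incid Y b ∧ R.Incid Y t ∧ Y ≠ C

/-- Points of the plane generated by ordinary lines a, b through C. -/
def Pts (R : ProjRect Point Line) (a b : Line) (C : Point) : Set Point :=
  {p | p = R.D ∨ R.Incid p a ∨ R.Incid p b ∨ ∃ t, R.OrdT a b C t ∧ R.Incid p t}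

/-- Lines of the plane generated by ordinary lines a, b through C. -/
def Lns (R : ProjRect Point Line) (a b : Line) (C : Point) : Set Line :=
  {l | l = a ∨ l = b ∨ R.Incid R.D l ∨
    (∃ X Y, R.Incid X a ∧ R.Incid X l ∧ X ≠ C ∧ R.Incid Y b ∧ R.Incid Y l ∧ Y ≠ C) ∨
    (R.Incid C l ∧ ∃ q, R.Incid q l ∧ ¬R.Incid q a ∧ ¬R.Incid q b ∧
      ∃ t, R.OrdT a b C t ∧ R.Incid q t)}

section Main

variable (R : ProjRect Point Line) {a b : Line} {C : Point}

/-- A point on both base lines equals the center. -/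
lemma mem_ab (hab : a ≠ b) (hCa : R.Incid C a) (hCb : R.Incid C b)
    {x : Point} (hxa : R.Incid x a) (hxb : R.Incid x b) : x = C :=
  R.eq_pt hab hxa hxb hCa hCb

lemma ordT_ne_a (hab : a ≠ b) (hCa : R.Incid C a) (hCb : R.Incid C b)
    {t : Line} (ht : R.OrdT a b C t) : t ≠ a := by
  rintro rfl
  obtain ⟨-, X, Y, hXa, hXt, hXC, hYb, hYt, hYC⟩ := ht
  exact hYC (R.mem_ab hab hCa hCb hYt hYb)

lemma ordT_ne_b (hab : a ≠ b) (hCa : R.Incid C a) (hCb : R.Incid C b)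
    {t : Line} (ht : R.OrdT a b C t) : t ≠ b := by
  rintro rfl
  obtain ⟨-, X, Y, hXa, hXt, hXC, hYb, hYt, hYC⟩ := ht
  exact hXC (R.mem_ab hab hCa hCb hXa hXt)

lemma ordT_notC (hab : a ≠ b) (hCa : R.Incid C a) (hCb : R.Incid C b)
    {t : Line} (ht : R.OrdT a b C t) : ¬R.Incid C t := by
  intro hCt
  have hne := R.ordT_ne_a hab hCa hCb ht
  obtain ⟨-, X, Y, hXa, hXt, hXC, hYb, hYt, hYC⟩ := ht
  exact hne (R.eq_line hXC hXt hCt hXa hCa)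

/-- Two ordinary transversals meet (H5). -/
lemma meet_TT (ha : ¬R.Incid R.D a) (hb : ¬R.Incid R.D b) (hab : a ≠ b)
    (hCa : R.Incid C a) (hCb : R.Incid C b)
    {t t' : Line} (ht : R.OrdT a b C t) (ht' : R.OrdT a b C t') :
    ∃ x, R.Incid x t ∧ R.Incid x t' := by
  by_cases htt : t = t'
  · subst htt
    obtain ⟨p, -, -, -, -, -, hp, -, -⟩ := R.A3 t
    exact ⟨p, hp, hp⟩
  obtain ⟨hDt, X, Y, hXa, hXt, hXC, hYb, hYt, hYC⟩ := ht
  obtain ⟨hDt', X', Y', hX'a, hX't', hX'C, hY'b, hY't', hY'C⟩ := ht'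
  by_cases hXX : X = X'
  · exact ⟨X, hXt, hXX ▸ hX't'⟩
  by_cases hYY : Y = Y'
  · exact ⟨Y, hYt, hYY ▸ hY't'⟩
  have hXY : X ≠ Y := fun e => hXC (R.mem_ab hab hCa hCb hXa (e ▸ hYb))
  have hXY' : X ≠ Y' := fun e => hXC (R.mem_ab hab hCa hCb hXa (e ▸ hY'b))
  have hX'Y : X' ≠ Y := fun e => hX'C (R.mem_ab hab hCa hCb hX'a (e ▸ hYb))
  have hX'Y' : X' ≠ Y' := fun e => hX'C (R.mem_ab hab hCa hCb hX'a (e ▸ hY'b))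
  exact R.A6 a b t t' C X X' Y Y' ha hb hab hCa hCb htt
    hXa hXt hX'a hX't' hYb hYt hY'b hY't' hXX hXY hXY' hX'Y hX'Y' hYY

/-- Join of a point of a (≠ C) and a transversal point lies in the plane (H1). -/
lemma join_aT (ha : ¬R.Incid R.D a) (hb : ¬R.Incid R.D b) (hab : a ≠ b)
    (hCa : R.Incid C a) (hCb : R.Incid C b)
    {p q : Point} {t l : Line} (hpa : R.Incid p a) (hpC : p ≠ C)
    (ht : R.OrdT a b C t) (hqt : R.Incid q t) (hqa : ¬R.Incid q a) (hqb : ¬R.Incid q b)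
    (hpl : R.Incid p l) (hql : R.Incid q l) : l ∈ R.Lns a b C := by
  have hta : t ≠ a := R.ordT_ne_a hab hCa hCb ht
  obtain ⟨hDt, X, Y, hXa, hXt, hXC, hYb, hYt, hYC⟩ := ht
  have hpq : p ≠ q := fun e => hqa (e ▸ hpa)
  by_cases hpX : p = X
  · have hlt : l = t := R.eq_line hpq hpl hql (hpX ▸ hXt) hqt
    exact Or.inr (Or.inr (Or.inr (Or.inl ⟨X, Y, hXa, hlt ▸ hXt, hXC, hYb, hlt ▸ hYt, hYC⟩)))
  have hCl : ¬R.Incid C l := by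
    intro hCl
    exact hqa ((R.eq_line hpC hpl hCl hpa hCa) ▸ hql)
  have hpb : ¬R.Incid p b := fun h => hpC (R.mem_ab hab hCa hCb hpa h)
  have hlb : l ≠ b := fun e => hqb (e ▸ hql)
  obtain ⟨W, hWl, hWb⟩ := R.A6 a t l b X p C q Y ha hDt hta.symm hXa hXt hlb
    hpa hpl hCa hCb hqt hql hYt hYb
    hpC hpq (fun e => hpb (e ▸ hYb)) (fun e => hqa (e.symm ▸ hCa)) (Ne.symm hYC) (fun e => hqb (e ▸ hYb))
  have hWC : W ≠ C := fun e => hCl (e ▸ hWl)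
  exact Or.inr (Or.inr (Or.inr (Or.inl ⟨p, W, hpa, hpl, hpC, hWb, hWl, hWC⟩)))

/-- Mirror of join_aT for the line b (H1'). -/
lemma join_bT (ha : ¬R.Incid R.D a) (hb : ¬R.Incid R.D b) (hab : a ≠ b)
    (hCa : R.Incid C a) (hCb : R.Incid C b)
    {p q : Point} {t l : Line} (hpb : R.Incid p b) (hpC : p ≠ C)
    (ht : R.OrdT a b C t) (hqt : R.Incid q t) (hqa : ¬R.Incid q a) (hqb : ¬R.Incid q b)
    (hpl : R.Incid p l) (hql : R.Incid q l) : l ∈ R.Lns a b C := by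
  have htb : t ≠ b := R.ordT_ne_b hab hCa hCb ht
  obtain ⟨hDt, X, Y, hXa, hXt, hXC, hYb, hYt, hYC⟩ := ht
  have hpq : p ≠ q := fun e => hqb (e ▸ hpb)
  by_cases hpY : p = Y
  · have hlt : l = t := R.eq_line hpq hpl hql (hpY ▸ hYt) hqt
    exact Or.inr (Or.inr (Or.inr (Or.inl ⟨X, Y, hXa, hlt ▸ hXt, hXC, hYb, hlt ▸ hYt, hYC⟩)))
  have hCl : ¬R.Incid C l := by
    intro hCl
    exact hqb ((R.eq_line hpC hpl hCl hpb hCb) ▸ hql)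
  have hpa : ¬R.Incid p a := fun h => hpC (R.mem_ab hab hCa hCb h hpb)
  have hla : l ≠ a := fun e => hqa (e ▸ hql)
  obtain ⟨W, hWl, hWa⟩ := R.A6 b t l a Y p C q X hb hDt htb.symm hYb hYt hla
    hpb hpl hCb hCa hqt hql hXt hXa
    hpC hpq (fun e => hpa (e ▸ hXa)) (fun e => hqb (e.symm ▸ hCb)) (Ne.symm hXC) (fun e => hqa (e ▸ hXa))
  have hWC : W ≠ C := fun e => hCl (e ▸ hWl)
  exact Or.inr (Or.inr (Or.inr (Or.inl ⟨W, p, hWa, hWl, hWC, hpb, hpl, hpC⟩)))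

/-- Join of two transversal points lies in the plane (H2). -/
lemma join_TT (ha : ¬R.Incid R.D a) (hb : ¬R.Incid R.D b) (hab : a ≠ b)
    (hCa : R.Incid C a) (hCb : R.Incid C b)
    {p q : Point} {tp tq l : Line}
    (htp : R.OrdT a b C tp) (hptp : R.Incid p tp) (hpa : ¬R.Incid p a) (hpb : ¬R.Incid p b)
    (htq : R.OrdT a b C tq) (hqtq : R.Incid q tq) (hqa : ¬R.Incid q a) (hqb : ¬R.Incid q b)
    (hpq : p ≠ q) (hpl : R.Incid p l) (hql : R.Incid q l) : l ∈ R.Lns a b C := by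
  by_cases hqtp : R.Incid q tp
  · have hlt : l = tp := R.eq_line hpq hpl hql hptp hqtp
    obtain ⟨hDt, X, Y, hXa, hXt, hXC, hYb, hYt, hYC⟩ := htp
    exact Or.inr (Or.inr (Or.inr (Or.inl ⟨X, Y, hXa, hlt ▸ hXt, hXC, hYb, hlt ▸ hYt, hYC⟩)))
  by_cases hptq : R.Incid p tq
  · have hlt : l = tq := R.eq_line hpq hpl hql hptq hqtq
    obtain ⟨hDt, X, Y, hXa, hXt, hXC, hYb, hYt, hYC⟩ := htq
    exact Or.inr (Or.inr (Or.inr (Or.inl ⟨X, Y, hXa, hlt ▸ hXt, hXC, hYb, hlt ▸ hYt, hYC⟩)))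
  by_cases hCl : R.Incid C l
  · exact Or.inr (Or.inr (Or.inr (Or.inr ⟨hCl, q, hql, hqa, hqb, tq, htq, hqtq⟩)))
  obtain ⟨R0, hR0p, hR0q⟩ := R.meet_TT ha hb hab hCa hCb htp htq
  have htpa : tp ≠ a := R.ordT_ne_a hab hCa hCb htp
  have htpb : tp ≠ b := R.ordT_ne_b hab hCa hCb htp
  have htptq : tp ≠ tq := fun e => hqtp (e ▸ hqtq)
  obtain ⟨hDtp, Xp, Yp, hXpa, hXpt, hXpC, hYpb, hYpt, hYpC⟩ := htp
  obtain ⟨hDtq, Xq, Yq, hXqa, hXqt, hXqC, hYqb, hYqt, hYqC⟩ := htq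
  have hXpYp : Xp ≠ Yp := fun e => hXpC (R.mem_ab hab hCa hCb hXpa (e ▸ hYpb))
  by_cases hXX : Xp = Xq
  · -- shared foot on a; go through b first
    have hYY : Yp ≠ Yq := by
      intro e
      exact hqtp ((R.eq_line hXpYp hXpt hYpt (hXX ▸ hXqt) (e ▸ hYqt)) ▸ hqtq)
    have hlb : l ≠ b := fun e => hpb (e ▸ hpl)
    obtain ⟨W, hWl, hWb⟩ := R.A6 tp tq l b R0 p Yp q Yq hDtp hDtq htptq hR0p hR0q hlb
      hptp hpl hYpt hYpb hqtq hql hYqt hYqb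
      (fun e => hpb (e ▸ hYpb)) hpq (fun e => hptq (e ▸ hYqt))
      (fun e => hqtp (e.symm ▸ hYpt)) hYY (fun e => hqb (e ▸ hYqb))
    have hWC : W ≠ C := fun e => hCl (e ▸ hWl)
    have hWp : W ≠ p := fun e => hpb (e ▸ hWb)
    have hla : l ≠ a := fun e => hpa (e ▸ hpl)
    obtain ⟨Z, hZl, hZa⟩ := R.A6 b tp l a Yp W C p Xp hb hDtp htpb.symm hYpb hYpt hla
      hWb hWl hCb hCa hptp hpl hXpt hXpa
      hWC hWp (fun e => hXpC (R.mem_ab hab hCa hCb hXpa (e ▸ hWb)))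
      (fun e => hpb (e.symm ▸ hCb)) (Ne.symm hXpC) (fun e => hpa (e ▸ hXpa))
    have hZC : Z ≠ C := fun e => hCl (e ▸ hZl)
    exact Or.inr (Or.inr (Or.inr (Or.inl ⟨Z, W, hZa, hZl, hZC, hWb, hWl, hWC⟩)))
  · have hla : l ≠ a := fun e => hpa (e ▸ hpl)
    obtain ⟨Z, hZl, hZa⟩ := R.A6 tp tq l a R0 p Xp q Xq hDtp hDtq htptq hR0p hR0q hla
      hptp hpl hXpt hXpa hqtq hql hXqt hXqa
      (fun e => hpa (e ▸ hXpa)) hpq (fun e => hptq (e ▸ hXqt))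
      (fun e => hqtp (e.symm ▸ hXpt)) hXX (fun e => hqa (e ▸ hXqa))
    have hZC : Z ≠ C := fun e => hCl (e ▸ hZl)
    have hZp : Z ≠ p := fun e => hpa (e ▸ hZa)
    have hlb : l ≠ b := fun e => hpb (e ▸ hpl)
    obtain ⟨W, hWl, hWb⟩ := R.A6 a tp l b Xp Z C p Yp ha hDtp htpa.symm hXpa hXpt hlb
      hZa hZl hCa hCb hptp hpl hYpt hYpb
      hZC hZp (fun e => hYpC (R.mem_ab hab hCa hCb (e ▸ hZa) hYpb)) 
      (fun e => hpa (e.symm ▸ hCa)) (Ne.symm hYpC) (fun e => hpb (e ▸ hYpb))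
    exact Or.inr (Or.inr (Or.inr (Or.inl ⟨Z, W, hZa, hZl, hZC, hWb, hWl, (fun e => hCl (e ▸ hWl))⟩)))

/-- Every point of an ordinary C-line with a transversal witness is a plane point (H4). -/
lemma pts_K (ha : ¬R.Incid R.D a) (hb : ¬R.Incid R.D b) (hab : a ≠ b)
    (hCa : R.Incid C a) (hCb : R.Incid C b)
    {k t0 : Line} {q0 S : Point}
    (hDk : ¬R.Incid R.D k) (hCk : R.Incid C k)
    (ht0 : R.OrdT a b C t0) (hq0k : R.Incid q0 k) (hq0t0 : R.Incid q0 t0)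
    (hSk : R.Incid S k) : S ∈ R.Pts a b C := by
  by_cases hSa : R.Incid S a
  · exact Or.inr (Or.inl hSa)
  by_cases hSb : R.Incid S b
  · exact Or.inr (Or.inr (Or.inl hSb))
  by_cases hSt0 : R.Incid S t0
  · exact Or.inr (Or.inr (Or.inr ⟨t0, ht0, hSt0⟩))
  have hSC : S ≠ C := fun e => hSa (e ▸ hCa)
  have hCt0 : ¬R.Incid C t0 := R.ordT_notC hab hCa hCb ht0
  have hkt0 : k ≠ t0 := fun e => hCt0 (e ▸ hCk)
  have hka : k ≠ a := fun e => hSa (e ▸ hSk)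
  have hkb : k ≠ b := fun e => hSb (e ▸ hSk)
  obtain ⟨hDt0, X0, Y0, hX0a, hX0t, hX0C, hY0b, hY0t, hY0C⟩ := ht0
  have hX0Y0 : X0 ≠ Y0 := fun e => hX0C (R.mem_ab hab hCa hCb hX0a (e ▸ hY0b))
  have hSX0 : S ≠ X0 := fun e => hSa (e ▸ hX0a)
  have hSY0 : S ≠ Y0 := fun e => hSb (e ▸ hY0b)
  obtain ⟨u, ⟨hSu, hX0u⟩, -⟩ := R.A1 S X0 hSX0
  have hub : u ≠ b := fun e => hSb (e ▸ hSu)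
  obtain ⟨W, hWu, hWb⟩ := R.A6 k t0 u b q0 S C X0 Y0 hDk hDt0 hkt0 hq0k hq0t0 hub
    hSk hSu hCk hCb hX0t hX0u hY0t hY0b
    hSC hSX0 hSY0 (Ne.symm hX0C) (Ne.symm hY0C) hX0Y0
  have hCu : ¬R.Incid C u := by
    intro hCu
    have huk : u = k := R.eq_line hSC hSu hCu hSk hCk
    exact hX0C (R.eq_pt hka (huk ▸ hX0u) hX0a hCk hCa)
  have hWC : W ≠ C := fun e => hCu (e ▸ hWu)
  by_cases hDu : R.Incid R.D u
  · obtain ⟨v, ⟨hSv, hY0v⟩, -⟩ := R.A1 S Y0 hSY0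
    have hva : v ≠ a := fun e => hSa (e ▸ hSv)
    obtain ⟨Z, hZv, hZa⟩ := R.A6 k t0 v a q0 S C Y0 X0 hDk hDt0 hkt0 hq0k hq0t0 hva
      hSk hSv hCk hCa hY0t hY0v hX0t hX0a
      hSC hSY0 hSX0 (Ne.symm hY0C) (Ne.symm hX0C) hX0Y0.symm
    by_cases hDv : R.Incid R.D v
    · by_cases huv : u = v
      · exfalso
        have hut0 : u = t0 := R.eq_line hX0Y0 hX0u (huv ▸ hY0v) hX0t hY0t
        exact hSt0 (hut0 ▸ hSu)
      · exfalso
        have hSD : S ≠ R.D := fun e => hDk (e ▸ hSk)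
        exact hSD (R.eq_pt huv hSu hSv hDu hDv)
    · have hCv : ¬R.Incid C v := by
        intro hCv
        have hvk : v = k := R.eq_line hSC hSv hCv hSk hCk
        exact hY0C (R.eq_pt hkb (hvk ▸ hY0v) hY0b hCk hCb)
      have hZC : Z ≠ C := fun e => hCv (e ▸ hZv)
      exact Or.inr (Or.inr (Or.inr ⟨v, ⟨hDv, Z, Y0, hZa, hZv, hZC, hY0b, hY0v, hY0C⟩, hSv⟩))
  · exact Or.inr (Or.inr (Or.inr ⟨u, ⟨hDu, X0, W, hX0a, hX0u, hX0C, hWb, hWu, hWC⟩, hSu⟩))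

/-- An ordinary transversal meets an ordinary C-line (H6). -/
lemma meet_TK (ha : ¬R.Incid R.D a) (hb : ¬R.Incid R.D b) (hab : a ≠ b)
    (hCa : R.Incid C a) (hCb : R.Incid C b)
    {k t t0 : Line} {q0 : Point}
    (ht : R.OrdT a b C t)
    (hDk : ¬R.Incid R.D k) (hCk : R.Incid C k)
    (ht0 : R.OrdT a b C t0) (hq0k : R.Incid q0 k) (hq0t0 : R.Incid q0 t0)
    (hq0a : ¬R.Incid q0 a) (hq0b : ¬R.Incid q0 b) :
    ∃ x, R.Incid x t ∧ R.Incid x k := by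
  by_cases hq0t : R.Incid q0 t
  · exact ⟨q0, hq0t, hq0k⟩
  obtain ⟨R0, hR0t0, hR0t⟩ := R.meet_TT ha hb hab hCa hCb ht0 ht
  have hCt : ¬R.Incid C t := R.ordT_notC hab hCa hCb ht
  have hCt0 : ¬R.Incid C t0 := R.ordT_notC hab hCa hCb ht0
  have hkt : k ≠ t := fun e => hCt (e ▸ hCk)
  have hq0R0 : q0 ≠ R0 := fun e => hq0t (e ▸ hR0t)
  have hq0C : q0 ≠ C := fun e => hCt0 (e ▸ hq0t0)
  have hR0C : R0 ≠ C := fun e => hCt (e ▸ hR0t)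
  obtain ⟨hDt, X, Y, hXa, hXt, hXC, hYb, hYt, hYC⟩ := ht
  have ht0a : t0 ≠ a := R.ordT_ne_a hab hCa hCb ht0
  have ht0b : t0 ≠ b := R.ordT_ne_b hab hCa hCb ht0
  have hDt0 : ¬R.Incid R.D t0 := ht0.1
  obtain ⟨-, X0, Y0, hX0a, hX0t0, hX0C, hY0b, hY0t0, hY0C⟩ := ht0
  by_cases hRX : R0 = X
  · obtain ⟨x, hxk, hxt⟩ := R.A6 t0 b k t Y0 q0 R0 C Y hDt0 hb ht0b hY0t0 hY0b hkt
      hq0t0 hq0k hR0t0 hR0t hCb hCk hYb hYt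
      hq0R0 hq0C (fun e => hq0b (e ▸ hYb)) hR0C
      (fun e => hYC (R.mem_ab hab hCa hCb ((hRX.symm.trans e) ▸ hXa) hYb)) (Ne.symm hYC)
    exact ⟨x, hxt, hxk⟩
  · obtain ⟨x, hxk, hxt⟩ := R.A6 t0 a k t X0 q0 R0 C X hDt0 ha ht0a hX0t0 hX0a hkt
      hq0t0 hq0k hR0t0 hR0t hCa hCk hXa hXt
      hq0R0 hq0C (fun e => hq0a (e ▸ hXa)) hR0C hRX (Ne.symm hXC)
    exact ⟨x, hxt, hxk⟩

/-- Classification of plane lines. -/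
lemma classify {l : Line} (hl : l ∈ R.Lns a b C) :
    l = a ∨ l = b ∨ R.Incid R.D l ∨ R.OrdT a b C l ∨
      (¬R.Incid R.D l ∧ R.Incid C l ∧ ∃ q, R.Incid q l ∧ ¬R.Incid q a ∧ ¬R.Incid q b ∧
        ∃ t, R.OrdT a b C t ∧ R.Incid q t) := by
  rcases hl with rfl | rfl | hD | ⟨X, Y, hT⟩ | hK
  · exact Or.inl rfl
  · exact Or.inr (Or.inl rfl)
  · exact Or.inr (Or.inr (Or.inl hD))
  · by_cases hDl : R.Incid R.D l
    · exact Or.inr (Or.inr (Or.inl hDl))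
    · exact Or.inr (Or.inr (Or.inr (Or.inl ⟨hDl, X, Y, hT⟩)))
  · by_cases hDl : R.Incid R.D l
    · exact Or.inr (Or.inr (Or.inl hDl))
    · exact Or.inr (Or.inr (Or.inr (Or.inr ⟨hDl, hK.1, hK.2⟩)))

/-- A special line meets each plane line in a plane point. -/
lemma meet_S (ha : ¬R.Incid R.D a) (hb : ¬R.Incid R.D b) (hab : a ≠ b)
    (hCa : R.Incid C a) (hCb : R.Incid C b)
    {l m : Line} (hDl : R.Incid R.D l) (hm : m ∈ R.Lns a b C) (hDm : ¬R.Incid R.D m) :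
    ∃ x, x ∈ R.Pts a b C ∧ R.Incid x l ∧ R.Incid x m := by
  have hne : m ≠ l := fun e => hDm (e ▸ hDl)
  obtain ⟨x, ⟨hxl, hxm⟩, -⟩ := R.A5 l m hDl hne
  rcases R.classify hm with rfl | rfl | hD | hT | hK
  · exact ⟨x, Or.inr (Or.inl hxm), hxl, hxm⟩
  · exact ⟨x, Or.inr (Or.inr (Or.inl hxm)), hxl, hxm⟩
  · exact absurd hD hDm
  · exact ⟨x, Or.inr (Or.inr (Or.inr ⟨m, hT, hxm⟩)), hxl, hxm⟩
  · obtain ⟨hDm', hCm, q0, hq0m, hq0a, hq0b, t0, ht0, hq0t0⟩ := hK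
    exact ⟨x, R.pts_K ha hb hab hCa hCb hDm' hCm ht0 hq0m hq0t0 hxm, hxl, hxm⟩

/-- Any two distinct plane lines meet in a plane point. -/
lemma meet_any (ha : ¬R.Incid R.D a) (hb : ¬R.Incid R.D b) (hab : a ≠ b)
    (hCa : R.Incid C a) (hCb : R.Incid C b)
    {l m : Line} (hl : l ∈ R.Lns a b C) (hm : m ∈ R.Lns a b C) (hlm : l ≠ m) :
    ∃ x, x ∈ R.Pts a b C ∧ R.Incid x l ∧ R.Incid x m := by
  by_cases hDl : R.Incid R.D l
  · by_cases hDm : R.Incid R.D m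
    · exact ⟨R.D, Or.inl rfl, hDl, hDm⟩
    · exact R.meet_S ha hb hab hCa hCb hDl hm hDm
  · by_cases hDm : R.Incid R.D m
    · obtain ⟨x, h1, h2, h3⟩ := R.meet_S ha hb hab hCa hCb hDm hl hDl
      exact ⟨x, h1, h3, h2⟩
    · have hCp : (C : Point) ∈ R.Pts a b C := Or.inr (Or.inl hCa)
      rcases R.classify hl with rfl | rfl | hD | hTl | hKl
      · rcases R.classify hm with rfl | rfl | hD | hTm | hKm
        · exact absurd rfl hlm
        · exact ⟨C, hCp, hCa, hCb⟩
        · exact absurd hD hDm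
        · obtain ⟨-, X, Y, hXa, hXm, -⟩ := hTm
          exact ⟨X, Or.inr (Or.inl hXa), hXa, hXm⟩
        · exact ⟨C, hCp, hCa, hKm.2.1⟩
      · rcases R.classify hm with rfl | rfl | hD | hTm | hKm
        · exact ⟨C, hCp, hCb, hCa⟩
        · exact absurd rfl hlm
        · exact absurd hD hDm
        · obtain ⟨-, X, Y, hXa, hXm, hXC, hYb, hYm, hYC⟩ := hTm
          exact ⟨Y, Or.inr (Or.inr (Or.inl hYb)), hYb, hYm⟩
        · exact ⟨C, hCp, hCb, hKm.2.1⟩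
      · exact absurd hD hDl
      · rcases R.classify hm with rfl | rfl | hD | hTm | hKm
        · obtain ⟨-, X, Y, hXa, hXl, -⟩ := hTl
          exact ⟨X, Or.inr (Or.inl hXa), hXl, hXa⟩
        · obtain ⟨-, X, Y, hXa, hXl, hXC, hYb, hYl, hYC⟩ := hTl
          exact ⟨Y, Or.inr (Or.inr (Or.inl hYb)), hYl, hYb⟩
        · exact absurd hD hDm
        · obtain ⟨x, hx1, hx2⟩ := R.meet_TT ha hb hab hCa hCb hTl hTm
          exact ⟨x, Or.inr (Or.inr (Or.inr ⟨l, hTl, hx1⟩)), hx1, hx2⟩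
        · obtain ⟨hDm', hCm, q0, hq0m, hq0a, hq0b, t0, ht0, hq0t0⟩ := hKm
          obtain ⟨x, hxl, hxm⟩ := R.meet_TK ha hb hab hCa hCb hTl hDm' hCm ht0 hq0m hq0t0 hq0a hq0b
          exact ⟨x, Or.inr (Or.inr (Or.inr ⟨l, hTl, hxl⟩)), hxl, hxm⟩
      · obtain ⟨hDl', hCl, q0, hq0l, hq0a, hq0b, t0, ht0, hq0t0⟩ := hKl
        rcases R.classify hm with rfl | rfl | hD | hTm | hKm
        · exact ⟨C, hCp, hCl, hCa⟩
        · exact ⟨C, hCp, hCl, hCb⟩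
        · exact absurd hD hDm
        · obtain ⟨x, hxm, hxl⟩ := R.meet_TK ha hb hab hCa hCb hTm hDl' hCl ht0 hq0l hq0t0 hq0a hq0b
          exact ⟨x, Or.inr (Or.inr (Or.inr ⟨m, hTm, hxm⟩)), hxl, hxm⟩
        · exact ⟨C, hCp, hCl, hKm.2.1⟩

/-- The join of two distinct plane points is a plane line. -/
lemma join_any (ha : ¬R.Incid R.D a) (hb : ¬R.Incid R.D b) (hab : a ≠ b)
    (hCa : R.Incid C a) (hCb : R.Incid C b)
    {p q : Point} (hp : p ∈ R.Pts a b C) (hq : q ∈ R.Pts a b C) (hpq : p ≠ q) :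
    ∃! l, l ∈ R.Lns a b C ∧ R.Incid p l ∧ R.Incid q l := by
  have getT : ∀ x, x ∈ R.Pts a b C → x ≠ R.D → ¬R.Incid x a → ¬R.Incid x b →
      ∃ t, R.OrdT a b C t ∧ R.Incid x t := by
    rintro x (rfl | hx | hx | hx) hD hxa hxb
    · exact absurd rfl hD
    · exact absurd hx hxa
    · exact absurd hx hxb
    · exact hx
  obtain ⟨l, ⟨hpl, hql⟩, hu⟩ := R.A1 p q hpq
  have hmem : l ∈ R.Lns a b C := by
    by_cases hpD : p = R.D
    · exact Or.inr (Or.inr (Or.inl (hpD ▸ hpl)))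
    by_cases hqD : q = R.D
    · exact Or.inr (Or.inr (Or.inl (hqD ▸ hql)))
    by_cases hpa2 : R.Incid p a
    · by_cases hqa2 : R.Incid q a
      · exact Or.inl (R.eq_line hpq hpl hql hpa2 hqa2)
      · by_cases hqb2 : R.Incid q b
        · by_cases hpC : p = C
          · exact Or.inr (Or.inl (R.eq_line hpq hpl hql (hpC.symm ▸ hCb) hqb2))
          · have hqC : q ≠ C := fun e => hqa2 (e.symm ▸ hCa)
            exact Or.inr (Or.inr (Or.inr (Or.inl ⟨p, q, hpa2, hpl, hpC, hqb2, hql, hqC⟩)))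
        · obtain ⟨tq, htq, hqtq⟩ := getT q hq hqD hqa2 hqb2
          by_cases hpC : p = C
          · exact Or.inr (Or.inr (Or.inr (Or.inr ⟨hpC ▸ hpl, q, hql, hqa2, hqb2, tq, htq, hqtq⟩)))
          · exact R.join_aT ha hb hab hCa hCb hpa2 hpC htq hqtq hqa2 hqb2 hpl hql
    · by_cases hpb2 : R.Incid p b
      · by_cases hqb2 : R.Incid q b
        · exact Or.inr (Or.inl (R.eq_line hpq hpl hql hpb2 hqb2))
        · have hpC : p ≠ C := fun e => hpa2 (e.symm ▸ hCa)
          by_cases hqa2 : R.Incid q a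
          · have hqC : q ≠ C := fun e => hqb2 (e.symm ▸ hCb)
            exact Or.inr (Or.inr (Or.inr (Or.inl ⟨q, p, hqa2, hql, hqC, hpb2, hpl, hpC⟩)))
          · obtain ⟨tq, htq, hqtq⟩ := getT q hq hqD hqa2 hqb2
            exact R.join_bT ha hb hab hCa hCb hpb2 hpC htq hqtq hqa2 hqb2 hpl hql
      · obtain ⟨tp, htp, hptp⟩ := getT p hp hpD hpa2 hpb2
        by_cases hqa2 : R.Incid q a
        · by_cases hqC : q = C
          · exact Or.inr (Or.inr (Or.inr (Or.inr ⟨hqC ▸ hql, p, hpl, hpa2, hpb2, tp, htp, hptp⟩)))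
          · exact R.join_aT ha hb hab hCa hCb hqa2 hqC htp hptp hpa2 hpb2 hql hpl
        · by_cases hqb2 : R.Incid q b
          · have hqC : q ≠ C := fun e => hqa2 (e.symm ▸ hCa)
            exact R.join_bT ha hb hab hCa hCb hqb2 hqC htp hptp hpa2 hpb2 hql hpl
          · obtain ⟨tq, htq, hqtq⟩ := getT q hq hqD hqa2 hqb2
            exact R.join_TT ha hb hab hCa hCb htp hptp hpa2 hpb2 htq hqtq hqa2 hqb2 hpq hpl hql
  exact ⟨l, ⟨hmem, hpl, hql⟩, fun y hy => hu y ⟨hy.2.1, hy.2.2⟩⟩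

/-- Two points on a line distinct from a given point. -/
lemma two_ne (l : Line) (C : Point) :
    ∃ x y, x ≠ y ∧ x ≠ C ∧ y ≠ C ∧ R.Incid x l ∧ R.Incid y l := by
  obtain ⟨p, q, r, hpq, hpr, hqr, hp, hq, hr⟩ := R.A3 l
  by_cases hpC : p = C
  · exact ⟨q, r, hqr, fun e => hpq (hpC.trans e.symm), fun e => hpr (hpC.trans e.symm), hq, hr⟩
  · by_cases hqC : q = C
    · exact ⟨p, r, hpr, hpC, fun e => hqr (hqC.trans e.symm), hp, hr⟩
    · exact ⟨p, q, hpq, hpC, hqC, hp, hq⟩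

/-- The plane generated by two ordinary lines is a full subplane. -/
theorem main (ha : ¬R.Incid R.D a) (hb : ¬R.Incid R.D b) (hab : a ≠ b)
    (hCa : R.Incid C a) (hCb : R.Incid C b) :
    R.IsSubplane (R.Pts a b C) (R.Lns a b C) ∧ R.IsFull (R.Pts a b C) (R.Lns a b C) := by
  constructor
  · refine ⟨fun p q hp hq hpq => R.join_any ha hb hab hCa hCb hp hq hpq,
      fun l m hl hm hlm => R.meet_any ha hb hab hCa hCb hl hm hlm, ?_⟩
    obtain ⟨X1, X2, hX12, hX1C, hX2C, hX1a, hX2a⟩ := R.two_ne a C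
    obtain ⟨Y1, Y2, hY12, hY1C, hY2C, hY1b, hY2b⟩ := R.two_ne b C
    have hXY : ∀ x y, x ≠ C → R.Incid x a → R.Incid y b → x ≠ y := by
      intro x y hxC hxa hyb e
      exact hxC (R.mem_ab hab hCa hCb hxa (e ▸ hyb))
    refine ⟨X1, X2, Y1, Y2, Or.inr (Or.inl hX1a), Or.inr (Or.inl hX2a),
      Or.inr (Or.inr (Or.inl hY1b)), Or.inr (Or.inr (Or.inl hY2b)),
      hX12, hXY X1 Y1 hX1C hX1a hY1b, hXY X1 Y2 hX1C hX1a hY2b,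
      hXY X2 Y1 hX2C hX2a hY1b, hXY X2 Y2 hX2C hX2a hY2b, hY12, ?_, ?_, ?_, ?_⟩
    · rintro l - ⟨h1, h2, h3⟩
      have hla : l = a := R.eq_line hX12 h1 h2 hX1a hX2a
      exact hY1C (R.mem_ab hab hCa hCb (hla ▸ h3) hY1b)
    · rintro l - ⟨h1, h2, h3⟩
      have hla : l = a := R.eq_line hX12 h1 h2 hX1a hX2a
      exact hY2C (R.mem_ab hab hCa hCb (hla ▸ h3) hY2b)
    · rintro l - ⟨h1, h2, h3⟩
      have hlb : l = b := R.eq_line hY12 h2 h3 hY1b hY2b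
      exact hX1C (R.mem_ab hab hCa hCb hX1a (hlb ▸ h1))
    · rintro l - ⟨h1, h2, h3⟩
      have hlb : l = b := R.eq_line hY12 h2 h3 hY1b hY2b
      exact hX2C (R.mem_ab hab hCa hCb hX2a (hlb ▸ h1))
  · intro l hl hDl p hpl
    rcases R.classify hl with rfl | rfl | hD | hT | hK
    · exact Or.inr (Or.inl hpl)
    · exact Or.inr (Or.inr (Or.inl hpl))
    · exact absurd hD hDl
    · exact Or.inr (Or.inr (Or.inr ⟨l, hT, hpl⟩))
    · obtain ⟨hDl', hCl, q0, hq0l, hq0a, hq0b, t0, ht0, hq0t0⟩ := hK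
      exact R.pts_K ha hb hab hCa hCb hDl' hCl ht0 hq0l hq0t0 hpl

/-- Pick a point on a line avoiding two given points. -/
lemma pick_avoid (l : Line) (u v : Point) : ∃ x, R.Incid x l ∧ x ≠ u ∧ x ≠ v := by
  obtain ⟨p, q, r, hpq, hpr, hqr, hp, hq, hr⟩ := R.A3 l
  by_cases hpu : p = u
  · by_cases hqv : q = v
    · exact ⟨r, hr, fun e => hpr (hpu.trans e.symm), fun e => hqr (hqv.trans e.symm)⟩
    · exact ⟨q, hq, fun e => hpq (hpu.trans e.symm), hqv⟩
  · by_cases hpv : p = v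
    · by_cases hqu : q = u
      · exact ⟨r, hr, fun e => hqr (hqu.trans e.symm), fun e => hpr (hpv.trans e.symm)⟩
      · exact ⟨q, hq, hqu, fun e => hpq (hpv.trans e.symm)⟩
    · exact ⟨p, hp, hpu, hpv⟩

/-- The coplanarity theorem in the case of two special lines and one ordinary line. -/
lemma two_special {s s' c : Line} {V1 V2 : Point}
    (hss' : s ≠ s') (hsc : s ≠ c) (hs'c : s' ≠ c)
    (hDs : R.Incid R.D s) (hDs' : R.Incid R.D s') (hDc : ¬R.Incid R.D c)
    (hV1s : R.Incid V1 s) (hV1c : R.Incid V1 c)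
    (hV2s' : R.Incid V2 s') (hV2c : R.Incid V2 c) (hV12 : V1 ≠ V2) :
    ∃ (P' : Set Point) (L' : Set Line),
      R.IsSubplane P' L' ∧ R.IsFull P' L' ∧ s ∈ L' ∧ s' ∈ L' ∧ c ∈ L' := by
  have hV2s : ¬R.Incid V2 s := fun h => hV12 (R.eq_pt hsc hV1s hV1c h hV2c)
  obtain ⟨P, hPs, hPD, hPV1⟩ := R.pick_avoid s R.D V1
  have hPV2 : P ≠ V2 := fun e => hV2s (e ▸ hPs)
  obtain ⟨c', ⟨hPc', hV2c'⟩, -⟩ := R.A1 P V2 hPV2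
  have hDc' : ¬R.Incid R.D c' := by
    intro h
    exact hV2s ((R.eq_line hPD hPc' h hPs hDs) ▸ hV2c')
  have hcc' : c ≠ c' := by
    intro e
    exact hPV1 (R.eq_pt hsc.symm (e ▸ hPc') hPs hV1c hV1s)
  obtain ⟨hsub, hfull⟩ := R.main (a := c) (b := c') (C := V2) hDc hDc' hcc' hV2c hV2c'
  refine ⟨_, _, hsub, hfull, ?_, Or.inr (Or.inr (Or.inl hDs')), Or.inl rfl⟩
  exact Or.inr (Or.inr (Or.inr (Or.inl ⟨V1, P, hV1c, hV1s, hV12, hPc', hPs, hPV2⟩)))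

end Main

end ProjRect


/-- Three lines intersecting pairwise in three distinct points form a coplanar triple. -/
theorem stmt_13 {Point Line : Type} (R : ProjRect Point Line) (l1 l2 l3 : Line)
    (h12 : l1 ≠ l2) (h13 : l1 ≠ l3) (h23 : l2 ≠ l3)
    (p12 p13 p23 : Point)
    (ha : R.Incid p12 l1) (hb : R.Incid p12 l2)
    (hc : R.Incid p13 l1) (hd : R.Incid p13 l3)
    (he : R.Incid p23 l2) (hf : R.Incid p23 l3)
    (hpa : p12 ≠ p13) (hpb : p12 ≠ p23) (hpc : p13 ≠ p23) :
    ∃ (P' : Set Point) (L' : Set Line),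
      R.IsSubplane P' L' ∧ R.IsFull P' L' ∧ l1 ∈ L' ∧ l2 ∈ L' ∧ l3 ∈ L' := by
  by_cases h1 : R.Incid R.D l1
  · by_cases h2 : R.Incid R.D l2
    · -- l1, l2 special: p12 = D; l3 must be ordinary, else p13 = D = p12
      have hD12 : p12 = R.D := R.eq_pt h12 ha hb h1 h2
      have h3 : ¬R.Incid R.D l3 := by
        intro h3
        exact hpa (hD12.trans (R.eq_pt h13 hc hd h1 h3).symm)
      obtain ⟨P', L', hsub, hfull, hs, hs', hcm⟩ :=
        R.two_special h12 h13 h23 h1 h2 h3 hc hd he hf hpc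
      exact ⟨P', L', hsub, hfull, hs, hs', hcm⟩
    · by_cases h3 : R.Incid R.D l3
      · -- l1, l3 special, l2 ordinary
        obtain ⟨P', L', hsub, hfull, hs, hs', hcm⟩ :=
          R.two_special (s := l1) (s' := l3) (c := l2) h13 h12 (Ne.symm h23) h1 h3 h2
            ha hb hf he hpb
        exact ⟨P', L', hsub, hfull, hs, hcm, hs'⟩
      · -- base (l2, l3), C := p23
        obtain ⟨hsub, hfull⟩ := R.main (a := l2) (b := l3) (C := p23) h2 h3 h23 he hf
        exact ⟨_, _, hsub, hfull,
          Or.inr (Or.inr (Or.inr (Or.inl ⟨p12, p13, hb, ha, hpb, hd, hc, hpc⟩))),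
          Or.inl rfl, Or.inr (Or.inl rfl)⟩
  · by_cases h2 : R.Incid R.D l2
    · by_cases h3 : R.Incid R.D l3
      · -- l2, l3 special, l1 ordinary
        obtain ⟨P', L', hsub, hfull, hs, hs', hcm⟩ :=
          R.two_special (s := l2) (s' := l3) (c := l1) h23 (Ne.symm h12) (Ne.symm h13)
            h2 h3 h1 hb ha hd hc hpa
        exact ⟨P', L', hsub, hfull, hcm, hs, hs'⟩
      · -- base (l1, l3), C := p13
        obtain ⟨hsub, hfull⟩ := R.main (a := l1) (b := l3) (C := p13) h1 h3 h13 hc hd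
        exact ⟨_, _, hsub, hfull, Or.inl rfl,
          Or.inr (Or.inr (Or.inr (Or.inl ⟨p12, p23, ha, hb, hpa, hf, he, hpc.symm⟩))),
          Or.inr (Or.inl rfl)⟩
    · -- base (l1, l2), C := p12
      obtain ⟨hsub, hfull⟩ := R.main (a := l1) (b := l2) (C := p12) h1 h2 h12 ha hb
      exact ⟨_, _, hsub, hfull, Or.inl rfl, Or.inr (Or.inl rfl),
        Or.inr (Or.inr (Or.inr (Or.inl ⟨p13, p23, hc, hd, hpa.symm, he, hf, hpb.symm⟩)))⟩
end

section
/- In a finite projective rectangle of order (m,n), the number of full projective subplanes containing a given ordinary line is (n-1)/(m-1), and in particular m-1 divides n-1. -/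
/-- A projective rectangle has order (m,n) if it has exactly m+1 special lines and
each special line has exactly n+1 points. -/
def ProjRect.HasOrder {Point Line : Type} (R : ProjRect Point Line) (m n : ℕ) : Prop :=
  Set.ncard {l : Line | R.Incid R.D l} = m + 1 ∧
  ∀ s : Line, R.Incid R.D s → Set.ncard {p : Point | R.Incid p s} = n + 1

namespace PR
open Set

variable {Point Line : Type} {R : ProjRect Point Line}

/-- The set of points of a line. -/
def pts (R : ProjRect Point Line) (g : Line) : Set Point := {x | R.Incid x g}

lemma mem_pts {g : Line} {x : Point} : x ∈ pts R g ↔ R.Incid x g := Iff.rfl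

/-- Join of two distinct points. -/
noncomputable def join_s15 (R : ProjRect Point Line) {x y : Point} (hxy : x ≠ y) : Line :=
  (R.A1 x y hxy).choose

lemma join_left {x y : Point} (hxy : x ≠ y) : R.Incid x (join_s15 R hxy) :=
  (R.A1 x y hxy).choose_spec.1.1

lemma join_right {x y : Point} (hxy : x ≠ y) : R.Incid y (join_s15 R hxy) :=
  (R.A1 x y hxy).choose_spec.1.2

lemma join_unique {x y : Point} (hxy : x ≠ y) {g : Line}
    (hx : R.Incid x g) (hy : R.Incid y g) : g = join_s15 R hxy :=
  (R.A1 x y hxy).choose_spec.2 g ⟨hx, hy⟩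

/-- Two distinct points lie on at most one line. -/
lemma line_eq_line {x y : Point} {g g' : Line} (hxy : x ≠ y)
    (hx : R.Incid x g) (hy : R.Incid y g) (hx' : R.Incid x g') (hy' : R.Incid y g') :
    g = g' := by
  rw [join_unique hxy hx hy, join_unique hxy hx' hy']

end PR
namespace PR
open Set

variable {Point Line : Type} {R : ProjRect Point Line} {m n : ℕ}

lemma finite_of_ncard_eq_succ {α : Type*} {s : Set α} {k : ℕ} (h : s.ncard = k + 1) :
    s.Finite := by
  by_contra h'
  rw [Set.Infinite.ncard h'] at h
  omega

/-- The set of special lines. -/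
def SpecL (R : ProjRect Point Line) : Set Line := {t | R.Incid R.D t}

/-- The special line through a point `x ≠ D`. -/
noncomputable def sl (R : ProjRect Point Line) {x : Point} (hx : x ≠ R.D) : Line :=
  join_s15 R hx

lemma sl_incid {x : Point} (hx : x ≠ R.D) : R.Incid x (sl R hx) := join_left hx

lemma sl_D {x : Point} (hx : x ≠ R.D) : R.Incid R.D (sl R hx) := join_right hx

lemma sl_unique {x : Point} (hx : x ≠ R.D) {t : Line} (ht : R.Incid R.D t)
    (hxt : R.Incid x t) : t = sl R hx :=
  join_unique hx hxt ht

/-- Two distinct lines share at most one point: if x ≠ y are on both, equal lines. -/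
lemma eq_pt_of_two_lines {g g' : Line} (hgg' : g ≠ g') {x y : Point}
    (hx : R.Incid x g) (hx' : R.Incid x g') (hy : R.Incid y g) (hy' : R.Incid y g') :
    x = y := by
  by_contra hxy
  exact hgg' (line_eq_line hxy hx hy hx' hy')

/-- An ordinary line is distinct from any special line. -/
lemma ord_ne_spec {g t : Line} (hg : ¬R.Incid R.D g) (ht : R.Incid R.D t) : g ≠ t :=
  fun e => hg (e ▸ ht)

/-- A point on an ordinary line is not D. -/
lemma ne_D_of_ord {g : Line} (hg : ¬R.Incid R.D g) {x : Point} (hx : R.Incid x g) :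
    x ≠ R.D := fun e => hg (e ▸ hx)

/-- Intersection point of a special line with any other line. -/
lemma spec_inter {t g : Line} (ht : R.Incid R.D t) (hgt : g ≠ t) :
    ∃! x : Point, R.Incid x t ∧ R.Incid x g := R.A5 t g ht hgt

/-- Unique intersection point of an ordinary line with a special line. -/
noncomputable def xpt (R : ProjRect Point Line) {t g : Line} (ht : R.Incid R.D t)
    (hgt : g ≠ t) : Point := (spec_inter ht hgt).choose

lemma xpt_spec {t g : Line} (ht : R.Incid R.D t) (hgt : g ≠ t) :
    R.Incid (xpt R ht hgt) t ∧ R.Incid (xpt R ht hgt) g :=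
  (spec_inter ht hgt).choose_spec.1

lemma xpt_unique {t g : Line} (ht : R.Incid R.D t) (hgt : g ≠ t) {y : Point}
    (hy : R.Incid y t) (hy' : R.Incid y g) : y = xpt R ht hgt :=
  (spec_inter ht hgt).choose_spec.2 y ⟨hy, hy'⟩

/-- The number of points on an ordinary line is m+1. -/
lemma card_pts_ord (h : R.HasOrder m n) {g : Line} (hg : ¬R.Incid R.D g) :
    (pts R g).ncard = m + 1 := by
  classical
  have hDg : ∀ x ∈ pts R g, x ≠ R.D := fun x hx => ne_D_of_ord hg hx
  set f : Point → Line := fun x => if hx : x = R.D then g else sl R hx with hf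
  have hinj : Set.InjOn f (pts R g) := by
    intro x hx y hy hxy
    have hxD := hDg x hx; have hyD := hDg y hy
    simp only [hf, dif_neg hxD, dif_neg hyD] at hxy
    by_contra hne
    have : g = sl R hxD := line_eq_line hne hx hy (sl_incid hxD) (hxy ▸ sl_incid hyD)
    exact hg (this ▸ sl_D hxD)
  have himg : f '' (pts R g) = SpecL R := by
    ext t
    constructor
    · rintro ⟨x, hx, rfl⟩
      have hxD := hDg x hx
      simp only [hf, dif_neg hxD]
      exact sl_D hxD
    · intro ht
      have hgt : g ≠ t := ord_ne_spec hg ht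
      refine ⟨xpt R ht hgt, (xpt_spec ht hgt).2, ?_⟩
      have hxD : xpt R ht hgt ≠ R.D := ne_D_of_ord hg (xpt_spec ht hgt).2
      simp only [hf, dif_neg hxD]
      exact (sl_unique hxD ht (xpt_spec ht hgt).1).symm
  have := Set.ncard_image_of_injOn hinj
  rw [himg] at this
  rw [← this]
  exact h.1

lemma pts_ord_finite (h : R.HasOrder m n) {g : Line} (hg : ¬R.Incid R.D g) :
    (pts R g).Finite := finite_of_ncard_eq_succ (card_pts_ord h hg)

lemma card_pts_spec (h : R.HasOrder m n) {t : Line} (ht : R.Incid R.D t) :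
    (pts R t).ncard = n + 1 := h.2 t ht

lemma pts_spec_finite (h : R.HasOrder m n) {t : Line} (ht : R.Incid R.D t) :
    (pts R t).Finite := finite_of_ncard_eq_succ (card_pts_spec h ht)

/-- The points of an ordinary line off a special line number m. -/
lemma card_offs (h : R.HasOrder m n) {s g : Line} (hs : R.Incid R.D s)
    (hg : ¬R.Incid R.D g) : (pts R g \ pts R s).ncard = m := by
  have hgs : g ≠ s := ord_ne_spec hg hs
  have hc := xpt_spec hs hgs
  have hdiff : pts R g \ pts R s = pts R g \ {xpt R hs hgs} := by
    ext x
    simp only [Set.mem_diff, mem_pts, Set.mem_singleton_iff]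
    constructor
    · rintro ⟨hxg, hxs⟩
      exact ⟨hxg, fun e => hxs (e ▸ hc.1)⟩
    · rintro ⟨hxg, hxs⟩
      exact ⟨hxg, fun hxs' => hxs (xpt_unique hs hgs hxs' hxg)⟩
  rw [hdiff, Set.ncard_diff_singleton_of_mem (show xpt R hs hgs ∈ pts R g from hc.2), card_pts_ord h hg]
  omega

/-- There exists an ordinary line. -/
lemma exists_ord (R : ProjRect Point Line) : ∃ g : Line, ¬R.Incid R.D g := by
  obtain ⟨a, b, c, d, hab, hac, had, hbc, hbd, hcd, h1, h2, h3, h4⟩ := R.A2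
  -- among a,b,c at most one equals D; pick two distinct points x y ≠ D with line not through D
  -- first, find x y with x ≠ y and the line x y not containing D
  by_contra hcon
  push_neg at hcon
  -- every line contains D; then any two of a,b,c are collinear with D, contradiction
  have habl := hcon (join_s15 R hab)
  have hacl := hcon (join_s15 R hac)
  have hbcl := hcon (join_s15 R hbc)
  have hne : join_s15 R hab ≠ join_s15 R hac := by
    intro e
    exact h1 (join_s15 R hab) ⟨join_left hab, join_right hab, e ▸ join_right hac⟩
  have : R.D = a := by
    by_contra hDa
    exact hne (line_eq_line (Ne.symm (fun e => hDa e.symm)) habl (join_left hab) hacl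
      (join_left hac))
  subst this
  -- now D = a; consider lines b c and b d through D
  have hbcl' := hcon (join_s15 R hbc)
  have hbdl := hcon (join_s15 R hbd)
  have hne2 : join_s15 R hbc ≠ join_s15 R hbd := by
    intro e
    exact h4 (join_s15 R hbc) ⟨join_left hbc, join_right hbc, e ▸ join_right hbd⟩
  have : R.D = b := by
    by_contra hDb
    exact hne2 (line_eq_line (Ne.symm (fun e => hDb e.symm)) hbcl' (join_left hbc) hbdl
      (join_left hbd))
  exact hab this

/-- m ≥ 2. -/
lemma two_le_m (h : R.HasOrder m n) : 2 ≤ m := by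
  obtain ⟨g, hg⟩ := exists_ord R
  obtain ⟨x, y, z, hxy, hxz, hyz, hxg, hyg, hzg⟩ := R.A3 g
  have hfin := pts_ord_finite h hg
  have hsub : {x, y, z} ⊆ pts R g := by
    intro w hw
    rcases hw with rfl | rfl | rfl <;> assumption
  have h3 : ({x, y, z} : Set Point).ncard = 3 :=
    Set.ncard_eq_three.mpr ⟨x, y, z, hxy, hxz, hyz, rfl⟩
  have hle := Set.ncard_le_ncard hsub hfin
  rw [h3, card_pts_ord h hg] at hle
  omega

lemma exists_offs_pt (h : R.HasOrder m n) {s g : Line} (hs : R.Incid R.D s)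
    (hg : ¬R.Incid R.D g) : ∃ a, R.Incid a g ∧ ¬R.Incid a s := by
  have hcard := card_offs h hs hg
  have hm := two_le_m h
  obtain ⟨a, ha⟩ := Set.nonempty_of_ncard_ne_zero
    (by omega : (pts R g \ pts R s).ncard ≠ 0)
  exact ⟨a, ha.1, ha.2⟩

lemma exists_two_offs (h : R.HasOrder m n) {s g : Line} (hs : R.Incid R.D s)
    (hg : ¬R.Incid R.D g) :
    ∃ x x' : Point, x ≠ x' ∧ R.Incid x g ∧ R.Incid x' g ∧ ¬R.Incid x s ∧ ¬R.Incid x' s := by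
  have hcard := card_offs h hs hg
  have hm := two_le_m h
  have h1 : 1 < (pts R g \ pts R s).ncard := by omega
  obtain ⟨x, hx⟩ := Set.nonempty_of_ncard_ne_zero (by omega : (pts R g \ pts R s).ncard ≠ 0)
  obtain ⟨x', hx', hxx'⟩ := Set.exists_ne_of_one_lt_ncard h1 x
  exact ⟨x', x, hxx', hx'.1, hx.1, hx'.2, hx.2⟩

/-- A point of an ordinary line off two special lines. -/
lemma exists_offs_two_lines (h : R.HasOrder m n) {s t g : Line} (hs : R.Incid R.D s)
    (ht : R.Incid R.D t) (hg : ¬R.Incid R.D g) :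
    ∃ a, R.Incid a g ∧ ¬R.Incid a s ∧ ¬R.Incid a t := by
  have hcard := card_offs h hs hg
  have hm := two_le_m h
  have hgt : g ≠ t := ord_ne_spec hg ht
  set c := xpt R ht hgt with hc
  have hne : ((pts R g \ pts R s) \ {c}).Nonempty := by
    rw [Set.nonempty_iff_ne_empty]
    intro hemp
    have hsub : pts R g \ pts R s ⊆ {c} := by
      intro w hw
      by_contra hwc
      exact (Set.eq_empty_iff_forall_notMem.1 hemp) w ⟨hw, hwc⟩
    have := Set.ncard_le_ncard hsub (Set.finite_singleton c)
    rw [hcard, Set.ncard_singleton] at this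
    omega
  obtain ⟨a, ⟨⟨hag, has⟩, hac⟩⟩ := hne
  refine ⟨a, hag, has, fun hat => hac ?_⟩
  exact xpt_unique ht hgt hat hag

end PR
namespace PR
open Set
set_option linter.unusedSectionVars false

variable {Point Line : Type} {R : ProjRect Point Line} {m n : ℕ}

/-- Points x off s such that some line through q and x meets l. -/
def Main (R : ProjRect Point Line) (l s : Line) (q : Point) : Set Point :=
  {x | ¬R.Incid x s ∧ ∃ g : Line, R.Incid q g ∧ R.Incid x g ∧ ∃ b, R.Incid b g ∧ R.Incid b l}

/-- Extra points on s: on a line joining two Main points. -/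
def Zset (R : ProjRect Point Line) (l s : Line) (q : Point) : Set Point :=
  {z | R.Incid z s ∧ z ≠ R.D ∧ z ≠ q ∧ ¬R.Incid z l ∧
    ∃ u v g, u ≠ v ∧ u ∈ Main R l s q ∧ v ∈ Main R l s q ∧
      R.Incid z g ∧ R.Incid u g ∧ R.Incid v g}

/-- The point set of the subplane generated by l and q. -/
def Pset (R : ProjRect Point Line) (l s : Line) (q : Point) : Set Point :=
  {R.D} ∪ {x | R.Incid x l} ∪ {q} ∪ Main R l s q ∪ Zset R l s q

/-- The line set of the subplane generated by l and q. -/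
def Lset (R : ProjRect Point Line) (l s : Line) (q : Point) : Set Line :=
  {g | ∃ u v, u ≠ v ∧ u ∈ Pset R l s q ∧ v ∈ Pset R l s q ∧ R.Incid u g ∧ R.Incid v g}

lemma q_ne_lpt' {l : Line} {q : Point} (hql : ¬R.Incid q l) {a : Point}
    (ha : R.Incid a l) : q ≠ a := fun e => hql (e ▸ ha)

/-- The q-line through a point of l. -/
noncomputable def qj (R : ProjRect Point Line) {l : Line} {q : Point}
    (hql : ¬R.Incid q l) {b : Point} (hb : R.Incid b l) : Line :=
  join_s15 R (q_ne_lpt' hql hb)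

lemma qj_q {l : Line} {q : Point} (hql : ¬R.Incid q l) {b : Point} (hb : R.Incid b l) :
    R.Incid q (qj R hql hb) := join_left _

lemma qj_b {l : Line} {q : Point} (hql : ¬R.Incid q l) {b : Point} (hb : R.Incid b l) :
    R.Incid b (qj R hql hb) := join_right _

lemma qj_ne_l {l : Line} {q : Point} (hql : ¬R.Incid q l) {b : Point} (hb : R.Incid b l) :
    qj R hql hb ≠ l := fun e => hql (e ▸ qj_q hql hb)

section Constr

variable {l s : Line} (hl : ¬R.Incid R.D l) (hs : R.Incid R.D s)
  {q : Point} (hq : R.Incid q s) (hqD : q ≠ R.D) (hql : ¬R.Incid q l)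

include hl hs hq hqD hql

lemma ls_ne : l ≠ s := ord_ne_spec hl hs

/-- Points on both l and s are equal (to each other). -/
lemma lspt_unique {x y : Point} (hx : R.Incid x l) (hx' : R.Incid x s)
    (hy : R.Incid y l) (hy' : R.Incid y s) : x = y :=
  eq_pt_of_two_lines (ord_ne_spec hl hs) hx hx' hy hy'

/-- The q-line of a point of l off s is ordinary. -/
lemma qj_ord {a : Point} (ha : R.Incid a l) (has : ¬R.Incid a s) :
    ¬R.Incid R.D (qj R hql ha) := by
  intro hD
  have hsq : s = qj R hql ha := line_eq_line hqD hq hs (qj_q hql ha) hD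
  exact has (hsq ▸ qj_b hql ha)

/-- Only q lies on both a q-line and s. -/
lemma qj_s_unique {a : Point} (ha : R.Incid a l) (has : ¬R.Incid a s)
    {x : Point} (hx : R.Incid x (qj R hql ha)) (hxs : R.Incid x s) : x = q := by
  have hne : qj R hql ha ≠ s := ord_ne_spec (qj_ord hl hs hq hqD hql ha has) hs
  exact eq_pt_of_two_lines hne hx hxs (qj_q hql ha) hq

/-- Only a lies on both the q-line of a and l. -/
lemma qj_l_unique {a : Point} (ha : R.Incid a l) {x : Point}
    (hx : R.Incid x (qj R hql ha)) (hxl : R.Incid x l) : x = a :=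
  eq_pt_of_two_lines (qj_ne_l hql ha) hx hxl (qj_b hql ha) ha

/-- Membership in Main via a point of l. -/
lemma main_of_qj {a : Point} (ha : R.Incid a l) {x : Point}
    (hx : R.Incid x (qj R hql ha)) (hxs : ¬R.Incid x s) : x ∈ Main R l s q :=
  ⟨hxs, qj R hql ha, qj_q hql ha, hx, a, qj_b hql ha, ha⟩

/-- Points of l off s are in Main. -/
lemma lpt_main {a : Point} (ha : R.Incid a l) (has : ¬R.Incid a s) : a ∈ Main R l s q :=
  main_of_qj hl hs hq hqD hql ha (qj_b hql ha) has

/-- Structure of a Main point. -/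
lemma main_spec {x : Point} (hx : x ∈ Main R l s q) :
    ¬R.Incid x s ∧ x ≠ q ∧ x ≠ R.D ∧
      ∃ b, ∃ hb : R.Incid b l, ¬R.Incid b s ∧ R.Incid x (qj R hql hb) := by
  obtain ⟨hxs, g, hqg, hxg, b, hbg, hbl⟩ := hx
  have hxq : x ≠ q := fun e => hxs (e ▸ hq)
  have hgD : ¬R.Incid R.D g := by
    intro hD
    have : s = g := line_eq_line hqD hq hs hqg hD
    exact hxs (this ▸ hxg)
  have hbs : ¬R.Incid b s := by
    intro hbs'
    have hbq : b = q := eq_pt_of_two_lines (ord_ne_spec hgD hs) hbg hbs' hqg hq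
    exact hql (hbq ▸ hbl)
  have hg : g = qj R hql hbl := join_unique _ hqg hbg
  exact ⟨hxs, hxq, ne_D_of_ord hgD hxg, b, hbl, hbs, hg ▸ hxg⟩

end Constr
end PR
namespace PR
open Set
set_option linter.unusedSectionVars false

variable {Point Line : Type} {R : ProjRect Point Line} {m n : ℕ}

lemma Pset_D {l s : Line} {q : Point} : R.D ∈ Pset R l s q := Or.inl (Or.inl (Or.inl (Or.inl rfl)))

lemma Pset_l {l s : Line} {q : Point} {x : Point} (hx : R.Incid x l) : x ∈ Pset R l s q :=
  Or.inl (Or.inl (Or.inl (Or.inr hx)))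

lemma Pset_q {l s : Line} {q : Point} : q ∈ Pset R l s q := Or.inl (Or.inl (Or.inr rfl))

lemma Pset_main {l s : Line} {q : Point} {x : Point} (hx : x ∈ Main R l s q) :
    x ∈ Pset R l s q := Or.inl (Or.inr hx)

lemma Pset_z {l s : Line} {q : Point} {x : Point} (hx : x ∈ Zset R l s q) :
    x ∈ Pset R l s q := Or.inr hx

lemma Pset_cases {l s : Line} {q : Point} {x : Point} (hx : x ∈ Pset R l s q) :
    x = R.D ∨ R.Incid x l ∨ x = q ∨ x ∈ Main R l s q ∨ x ∈ Zset R l s q := by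
  rcases hx with (((h1 | h2) | h3) | h4) | h5
  · exact Or.inl h1
  · exact Or.inr (Or.inl h2)
  · exact Or.inr (Or.inr (Or.inl h3))
  · exact Or.inr (Or.inr (Or.inr (Or.inl h4)))
  · exact Or.inr (Or.inr (Or.inr (Or.inr h5)))

section Closure

variable {l s : Line} (hl : ¬R.Incid R.D l) (hs : R.Incid R.D s)
  {q : Point} (hq : R.Incid q s) (hqD : q ≠ R.D) (hql : ¬R.Incid q l)

include hl hs hq hqD hql

/-- Lemma B: an ordinary line avoiding q with two distinct Main points meets l. -/
lemma lemB {g : Line} (hg : ¬R.Incid R.D g) (hqg : ¬R.Incid q g)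
    {u v : Point} (hu : u ∈ Main R l s q) (hv : v ∈ Main R l s q) (huv : u ≠ v)
    (hug : R.Incid u g) (hvg : R.Incid v g) :
    ∃ w, R.Incid w g ∧ R.Incid w l := by
  by_cases hul : R.Incid u l
  · exact ⟨u, hug, hul⟩
  by_cases hvl : R.Incid v l
  · exact ⟨v, hvg, hvl⟩
  obtain ⟨hus, huq, huD, bu, hbul, hbus, huqj⟩ := main_spec hl hs hq hqD hql hu
  obtain ⟨hvs, hvq, hvD, bv, hbvl, hbvs, hvqj⟩ := main_spec hl hs hq hqD hql hv
  have hqlines : qj R hql hbul ≠ qj R hql hbvl := by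
    intro e
    have hgq : g = qj R hql hbul := line_eq_line huv hug hvg huqj (e ▸ hvqj)
    exact hqg (hgq ▸ qj_q hql hbul)
  have hbb : bu ≠ bv := by
    intro e
    exact hqlines (by congr 1)
  have hgl : g ≠ l := fun e => hul (e ▸ hug)
  exact R.A6 (qj R hql hbul) (qj R hql hbvl) g l q u bu v bv
    (qj_ord hl hs hq hqD hql hbul hbus) (qj_ord hl hs hq hqD hql hbvl hbvs)
    hqlines (qj_q hql hbul) (qj_q hql hbvl) hgl
    huqj hug (qj_b hql hbul) hbul hvqj hvg (qj_b hql hbvl) hbvl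
    (fun e => hul (e ▸ hbul)) huv (fun e => hul (e ▸ hbvl))
    (fun e => hvl (e.symm ▸ hbul)) hbb (fun e => hvl (e ▸ hbvl))

/-- M1: on an ordinary line avoiding q that meets l and carries a Main point off l,
every point off s is Main. -/
lemma lemM1 {g : Line} (hg : ¬R.Incid R.D g) (hqg : ¬R.Incid q g)
    {w : Point} (hwg : R.Incid w g) (hwl : R.Incid w l)
    {x0 : Point} (hx0 : x0 ∈ Main R l s q) (hx0g : R.Incid x0 g) (hx0l : ¬R.Incid x0 l)
    {y : Point} (hyg : R.Incid y g) (hys : ¬R.Incid y s) : y ∈ Main R l s q := by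
  by_cases hyl : R.Incid y l
  · exact lpt_main hl hs hq hqD hql hyl hys
  by_cases hyx0 : y = x0
  · exact hyx0 ▸ hx0
  obtain ⟨hx0s, hx0q, hx0D, b, hbl, hbs, hx0qj⟩ := main_spec hl hs hq hqD hql hx0
  have hqy : q ≠ y := fun e => hys (e ▸ hq)
  have hbw : b ≠ w := by
    intro e
    have hwqj : R.Incid w (qj R hql hbl) := e ▸ qj_b hql hbl
    have hx0w : x0 ≠ w := fun e' => hx0l (e' ▸ hwl)
    have : g = qj R hql hbl := line_eq_line hx0w hx0g hwg hx0qj hwqj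
    exact hqg (this ▸ qj_q hql hbl)
  obtain ⟨t, htl, hty⟩ := R.A6 (qj R hql hbl) g l (join_s15 R hqy) x0 b q w y
    (qj_ord hl hs hq hqD hql hbl hbs) hg
    (fun e => hqg (e ▸ qj_q hql hbl)) hx0qj hx0g
    (fun e => hql (e ▸ join_left hqy))
    (qj_b hql hbl) hbl (qj_q hql hbl) (join_left hqy) hwg hwl hyg (join_right hqy)
    (fun e => hql (e ▸ hbl)) hbw (fun e => hyl (e.symm ▸ hbl))
    (fun e => hql (e ▸ hwl)) hqy (fun e => hyl (e.symm ▸ hwl))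
  exact ⟨hys, join_s15 R hqy, join_left hqy, join_right hqy, t, hty, htl⟩

/-- Case 1 closure: an ordinary line with two distinct Main points lies in Pset. -/
lemma closure1 {g : Line} (hg : ¬R.Incid R.D g)
    {u v : Point} (hu : u ∈ Main R l s q) (hv : v ∈ Main R l s q) (huv : u ≠ v)
    (hug : R.Incid u g) (hvg : R.Incid v g)
    {y : Point} (hyg : R.Incid y g) : y ∈ Pset R l s q := by
  obtain ⟨hus, huq, huD, bu, hbul, hbus, huqj⟩ := main_spec hl hs hq hqD hql hu
  by_cases hqg : R.Incid q g
  · -- g is the q-line of bu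
    have hgqj : g = qj R hql hbul := line_eq_line (Ne.symm huq) hqg hug (qj_q hql hbul) huqj
    by_cases hys : R.Incid y s
    · have : y = q := qj_s_unique hl hs hq hqD hql hbul hbus (hgqj ▸ hyg) hys
      exact this ▸ Pset_q
    · exact Pset_main (main_of_qj hl hs hq hqD hql hbul (hgqj ▸ hyg) hys)
  · by_cases hul : R.Incid u l
    · by_cases hvl : R.Incid v l
      · have : g = l := line_eq_line huv hug hvg hul hvl
        exact Pset_l (this ▸ hyg)
      · -- use v as the Main point off l, u as the meeting point
        by_cases hys : R.Incid y s
        · by_cases hyl : R.Incid y l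
          · exact Pset_l hyl
          · exact Pset_z ⟨hys, ne_D_of_ord hg hyg, fun e => hqg (e ▸ hyg), hyl,
              u, v, g, huv, hu, hv, hyg, hug, hvg⟩
        · exact Pset_main (lemM1 hl hs hq hqD hql hg hqg hug hul hv hvg hvl hyg hys)
    · obtain ⟨w, hwg, hwl⟩ := lemB hl hs hq hqD hql hg hqg hu hv huv hug hvg
      by_cases hys : R.Incid y s
      · by_cases hyl : R.Incid y l
        · exact Pset_l hyl
        · exact Pset_z ⟨hys, ne_D_of_ord hg hyg, fun e => hqg (e ▸ hyg), hyl,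
            u, v, g, huv, hu, hv, hyg, hug, hvg⟩
      · exact Pset_main (lemM1 hl hs hq hqD hql hg hqg hwg hwl hu hug hul hyg hys)

end Closure
end PR
namespace PR
open Set
set_option linter.unusedSectionVars false

variable {Point Line : Type} {R : ProjRect Point Line} {m n : ℕ}

section Pigeon

variable {l s : Line} (hl : ¬R.Incid R.D l) (hs : R.Incid R.D s)
  {q : Point} (hq : R.Incid q s) (hqD : q ≠ R.D) (hql : ¬R.Incid q l)

include hl hs hq hqD hql

/-- A Pset point off s is Main. -/
lemma Pset_offs {x : Point} (hx : x ∈ Pset R l s q) (hxs : ¬R.Incid x s) :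
    x ∈ Main R l s q := by
  rcases Pset_cases hx with rfl | h2 | rfl | h4 | h5
  · exact absurd hs hxs
  · exact lpt_main hl hs hq hqD hql h2 hxs
  · exact absurd hq hxs
  · exact h4
  · exact absurd h5.1 hxs

/-- K7: every q-line meets every "good" ordinary line avoiding q. -/
lemma qline_meets (h : R.HasOrder m n) {g : Line} (hg : ¬R.Incid R.D g)
    (hqg : ¬R.Incid q g) (hgP : ∀ y, R.Incid y g → y ∈ Pset R l s q)
    {a : Point} (ha : R.Incid a l) (has : ¬R.Incid a s) :
    ∃ t, R.Incid t g ∧ R.Incid t (qj R hql ha) := by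
  classical
  set A : Set Point := pts R g \ pts R s with hA
  set B : Set Point := pts R l \ pts R s with hB
  set P : Point → Point → Prop := fun y b =>
    R.Incid b l ∧ ¬R.Incid b s ∧ ∃ gq, R.Incid q gq ∧ R.Incid y gq ∧ R.Incid b gq with hP
  have hex : ∀ y ∈ A, ∃ b, P y b := by
    rintro y ⟨hyg, hys⟩
    obtain ⟨hys', hyq, hyD, b, hbl, hbs, hyqj⟩ :=
      main_spec hl hs hq hqD hql (Pset_offs hl hs hq hqD hql (hgP y hyg) hys)
    exact ⟨b, hbl, hbs, qj R hql hbl, qj_q hql hbl, hyqj, qj_b hql hbl⟩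
  set f : Point → Point := fun y => if hy : ∃ b, P y b then hy.choose else y with hf
  have hfP : ∀ y ∈ A, P y (f y) := by
    intro y hy
    have := hex y hy
    simp only [hf, dif_pos this]
    exact this.choose_spec
  have hmaps : ∀ y ∈ A, f y ∈ B := fun y hy => ⟨(hfP y hy).1, (hfP y hy).2.1⟩
  have hinj : Set.InjOn f A := by
    intro y hy y' hy' he
    by_contra hne
    obtain ⟨hbl, hbs, gq, hq1, hy1, hb1⟩ := hfP y hy
    obtain ⟨hbl', hbs', gq', hq1', hy1', hb1'⟩ := hfP y' hy'
    rw [he] at hb1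
    have hbq : f y' ≠ q := fun e => hbs' (e ▸ hq)
    have : gq = gq' := line_eq_line hbq hb1 hq1 hb1' hq1'
    have hgline : g = gq := line_eq_line hne hy.1 hy'.1 hy1 (this ▸ hy1')
    exact hqg (hgline ▸ hq1)
  have himg : f '' A = B := by
    apply Set.eq_of_subset_of_ncard_le
    · rintro b ⟨y, hy, rfl⟩; exact hmaps y hy
    · rw [Set.ncard_image_of_injOn hinj, card_offs h hs hg,
        card_offs h hs hl]
    · exact (pts_ord_finite h hl).diff
  have haB : a ∈ B := ⟨ha, has⟩
  rw [← himg] at haB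
  obtain ⟨y, hy, hfy⟩ := haB
  obtain ⟨hbl, hbs, gq, hq1, hy1, hb1⟩ := hfP y hy
  rw [hfy] at hb1
  have : gq = qj R hql ha := line_eq_line (q_ne_lpt' hql ha) hq1 hb1 (qj_q hql ha) (qj_b hql ha)
  exact ⟨y, hy.1, this ▸ hy1⟩

end Pigeon
end PR
namespace PR
open Set
set_option linter.unusedSectionVars false
set_option maxHeartbeats 1000000

variable {Point Line : Type} {R : ProjRect Point Line} {m n : ℕ}

section Closure3

variable {l s : Line} (hl : ¬R.Incid R.D l) (hs : R.Incid R.D s)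
  {q : Point} (hq : R.Incid q s) (hqD : q ≠ R.D) (hql : ¬R.Incid q l)

include hl hs hq hqD hql

/-- Case 3 closure: an ordinary line through a Zset point and a Main point lies in Pset. -/
lemma closure3 (h : R.HasOrder m n) {g : Line} (hg : ¬R.Incid R.D g)
    {z v : Point} (hz : z ∈ Zset R l s q) (hv : v ∈ Main R l s q)
    (hzg : R.Incid z g) (hvg : R.Incid v g)
    {y : Point} (hyg : R.Incid y g) : y ∈ Pset R l s q := by
  classical
  obtain ⟨hzs, hzD, hzq, hzl, u0, v0, hln, hu0v0, hu0, hv0, hzh, hu0h, hv0h⟩ := hz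
  obtain ⟨hvs, hvq, hvD, bv, hbvl, hbvs, hvqj⟩ := main_spec hl hs hq hqD hql hv
  have hzv : z ≠ v := fun e => hvs (e ▸ hzs)
  have hqg : ¬R.Incid q g := by
    intro hqg
    have : g = s := line_eq_line hzq hzg hqg hzs hq
    exact hvs (this ▸ hvg)
  -- the witness line hln is ordinary, avoids q, and lies in Pset
  have hhs : hln ≠ s := by
    intro e
    exact (main_spec hl hs hq hqD hql hu0).1 (e ▸ hu0h)
  have hhD : ¬R.Incid R.D hln := by
    intro hD
    exact hhs (line_eq_line hzD hzh hD hzs hs)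
  have hqh : ¬R.Incid q hln := by
    intro hqh
    exact hhs (line_eq_line hzq hzh hqh hzs hq)
  have hP_h : ∀ y', R.Incid y' hln → y' ∈ Pset R l s q := fun y' hy' =>
    closure1 hl hs hq hqD hql hhD hu0 hv0 hu0v0 hu0h hv0h hy'
  by_cases hvh : R.Incid v hln
  · -- then g = hln and we are done
    have hgh : g = hln := line_eq_line hzv hzg hvg hzh hvh
    exact hP_h y (hgh ▸ hyg)
  -- t0 : the meet of hln and the q-line of v
  obtain ⟨t0, ht0h, ht0qjv⟩ := qline_meets hl hs hq hqD hql h hhD hqh hP_h hbvl hbvs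
  -- for each a in l off s other than bv, g meets the q-line of a
  have key : ∀ a : Point, ∀ ha : R.Incid a l, ¬R.Incid a s → a ≠ bv →
      ∃ t, R.Incid t g ∧ R.Incid t (qj R hql ha) := by
    intro a ha has habv
    obtain ⟨ra, hrah, hraqj⟩ := qline_meets hl hs hq hqD hql h hhD hqh hP_h ha has
    have hqjne : qj R hql ha ≠ qj R hql hbvl := by
      intro e
      exact habv (qj_l_unique hl hs hq hqD hql hbvl (e ▸ qj_b hql ha) ha)
    refine R.A6 hln (qj R hql hbvl) g (qj R hql ha) t0 z ra v q
      hhD (qj_ord hl hs hq hqD hql hbvl hbvs) (fun e => hqh (e.symm ▸ qj_q hql hbvl))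
      ht0h ht0qjv (fun e => hqg (e.symm ▸ qj_q hql ha))
      hzh hzg hrah hraqj hvqj hvg (qj_q hql hbvl) (qj_q hql ha)
      ?_ hzv hzq ?_ (fun e => hqh (e ▸ hrah)) hvq
    · intro e
      exact hzq (qj_s_unique hl hs hq hqD hql ha has (e ▸ hraqj) hzs)
    · intro e
      exact hvh (e ▸ hrah)
  -- build the injection from points of l off s, other than bv, into g ∩ Pset
  set B' : Set Point := (pts R l \ pts R s) \ {bv} with hB'
  set Q : Point → Point → Prop := fun a t => R.Incid t g ∧ ∃ gq : Line,
    R.Incid q gq ∧ R.Incid t gq ∧ R.Incid a gq with hQ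
  have hexQ : ∀ a ∈ B', ∃ t, Q a t := by
    rintro a ⟨⟨hal, has⟩, habv⟩
    obtain ⟨t, htg, htqj⟩ := key a hal has habv
    exact ⟨t, htg, qj R hql hal, qj_q hql hal, htqj, qj_b hql hal⟩
  set ψ : Point → Point := fun a => if ha : ∃ t, Q a t then ha.choose else a with hψ
  have hψQ : ∀ a ∈ B', Q a (ψ a) := by
    intro a ha
    have := hexQ a ha
    simp only [hψ, dif_pos this]
    exact this.choose_spec
  have hψne : ∀ a ∈ B', ψ a ≠ q ∧ ¬R.Incid (ψ a) s ∧ ψ a ∈ Main R l s q := by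
    rintro a ha
    obtain ⟨htg, gq, hq1, ht1, ha1⟩ := hψQ a ha
    obtain ⟨⟨hal, has⟩, habv⟩ := ha
    have h1 : ψ a ≠ q := fun e => hqg (e ▸ htg)
    have hgq : gq = qj R hql hal := line_eq_line (q_ne_lpt' hql hal) hq1 ha1
      (qj_q hql hal) (qj_b hql hal)
    have h2 : ¬R.Incid (ψ a) s := by
      intro h2'
      exact h1 (qj_s_unique hl hs hq hqD hql hal has (hgq ▸ ht1) h2')
    exact ⟨h1, h2, main_of_qj hl hs hq hqD hql hal (hgq ▸ ht1) h2⟩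
  have hψinj : Set.InjOn ψ B' := by
    intro a ha a' ha' he
    by_contra hne
    obtain ⟨htg, gq, hq1, ht1, ha1⟩ := hψQ a ha
    obtain ⟨htg', gq', hq1', ht1', ha1'⟩ := hψQ a' ha'
    rw [he] at ht1
    have hgqne : gq ≠ gq' := by
      intro e
      have : a = a' := eq_pt_of_two_lines (fun e' : l = gq => hql (e' ▸ hq1))
        ha.1.1 (by exact ha1) ha'.1.1 (e ▸ ha1')
      exact hne this
    have : ψ a' = q := eq_pt_of_two_lines hgqne ht1 (by exact ht1') hq1 hq1'
    exact (hψne a' ha').1 this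
  have hψv : ∀ a ∈ B', ψ a ≠ v := by
    intro a ha he
    obtain ⟨htg, gq, hq1, ht1, ha1⟩ := hψQ a ha
    have hgq : gq = qj R hql ha.1.1 := line_eq_line (q_ne_lpt' hql ha.1.1) hq1 ha1
      (qj_q hql ha.1.1) (qj_b hql ha.1.1)
    have hqjne : qj R hql ha.1.1 ≠ qj R hql hbvl := by
      intro e
      exact ha.2 (qj_l_unique hl hs hq hqD hql hbvl (e ▸ qj_b hql ha.1.1) ha.1.1)
    have : v = q := eq_pt_of_two_lines hqjne (hgq ▸ he ▸ ht1) hvqj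
      (qj_q hql ha.1.1) (qj_q hql hbvl)
    exact hvq this
  -- cardinality exhaustion
  have hBfin : B'.Finite := ((pts_ord_finite h hl).diff).diff
  have hB'card : B'.ncard = m - 1 := by
    rw [hB', Set.ncard_diff_singleton_of_mem
      (show bv ∈ pts R l \ pts R s from ⟨hbvl, hbvs⟩), card_offs h hs hl]
  set S : Set Point := insert z (insert v (ψ '' B')) with hS
  have hSsub : S ⊆ pts R g := by
    intro x hx
    rcases hx with rfl | rfl | ⟨a, ha, rfl⟩
    · exact hzg
    · exact hvg
    · exact (hψQ a ha).1
  have hScard : S.ncard = m + 1 := by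
    have h2 : v ∉ ψ '' B' := by
      rintro ⟨a, ha, he⟩
      exact hψv a ha he
    have h1 : z ∉ insert v (ψ '' B') := by
      rintro (rfl | ⟨a, ha, he⟩)
      · exact hzv rfl
      · exact (hψne a ha).2.1 (he ▸ hzs)
    have hm : 2 ≤ m := two_le_m h
    rw [hS, Set.ncard_insert_of_notMem h1 ((hBfin.image ψ).insert v),
      Set.ncard_insert_of_notMem h2 (hBfin.image ψ),
      Set.ncard_image_of_injOn hψinj, hB'card]
    omega
  have hSeq : S = pts R g := Set.eq_of_subset_of_ncard_le hSsub
    (by rw [hScard, card_pts_ord h hg]) (pts_ord_finite h hg)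
  have hyS : y ∈ S := hSeq ▸ hyg
  rcases hyS with rfl | rfl | ⟨a, ha, rfl⟩
  · exact Pset_z ⟨hzs, hzD, hzq, hzl, u0, v0, hln, hu0v0, hu0, hv0, hzh, hu0h, hv0h⟩
  · exact Pset_main hv
  · exact Pset_main (hψne a ha).2.2

end Closure3
end PR
namespace PR
open Set
set_option linter.unusedSectionVars false
set_option maxHeartbeats 1000000

variable {Point Line : Type} {R : ProjRect Point Line} {m n : ℕ}

section ClosureE

variable {l s : Line} (hl : ¬R.Incid R.D l) (hs : R.Incid R.D s)
  {q : Point} (hq : R.Incid q s) (hqD : q ≠ R.D) (hql : ¬R.Incid q l)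

include hl hs hq hqD hql

/-- Mixed closure: ordinary line through a Pset point on s and a Main point. -/
lemma closure2 (h : R.HasOrder m n) {g : Line} (hg : ¬R.Incid R.D g)
    (hqg : ¬R.Incid q g) {w x : Point} (hw : w ∈ Pset R l s q) (hwg : R.Incid w g)
    (hws : R.Incid w s) (hx : x ∈ Main R l s q) (hxg : R.Incid x g)
    {y : Point} (hyg : R.Incid y g) : y ∈ Pset R l s q := by
  rcases Pset_cases hw with rfl | hwl | rfl | hwM | hwZ
  · exact absurd hwg hg
  · -- w on l and s
    by_cases hxl : R.Incid x l
    · have hwx : w ≠ x := fun e => (main_spec hl hs hq hqD hql hx).1 (e ▸ hws)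
      have : g = l := line_eq_line hwx hwg hxg hwl hxl
      exact Pset_l (this ▸ hyg)
    · by_cases hys : R.Incid y s
      · have : y = w := eq_pt_of_two_lines (ord_ne_spec hg hs) hyg hys hwg hws
        exact this ▸ Pset_l hwl
      · exact Pset_main (lemM1 hl hs hq hqD hql hg hqg hwg hwl hx hxg hxl hyg hys)
  · exact absurd hwg hqg
  · exact absurd hws (main_spec hl hs hq hqD hql hwM).1
  · exact closure3 hl hs hq hqD hql h hg hwZ hx hwg hxg hyg

/-- Full closure: any ordinary line with two distinct Pset points lies in Pset. -/
lemma closureE (h : R.HasOrder m n) {g : Line} (hg : ¬R.Incid R.D g)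
    {u v : Point} (hu : u ∈ Pset R l s q) (hv : v ∈ Pset R l s q) (huv : u ≠ v)
    (hug : R.Incid u g) (hvg : R.Incid v g)
    {y : Point} (hyg : R.Incid y g) : y ∈ Pset R l s q := by
  by_cases hqg : R.Incid q g
  · have key : ∀ w, w ∈ Pset R l s q → R.Incid w g → w ≠ q → y ∈ Pset R l s q := by
      intro w hw hwg hwq
      have hws : ¬R.Incid w s := by
        intro hws'
        have : g = s := line_eq_line hwq hwg hqg hws' hq
        exact hg (this.symm ▸ hs)
      have hwM := Pset_offs hl hs hq hqD hql hw hws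
      obtain ⟨hws', hwq', hwD, b, hbl, hbs, hwqj⟩ := main_spec hl hs hq hqD hql hwM
      have hgqj : g = qj R hql hbl := line_eq_line (Ne.symm hwq) hqg hwg (qj_q hql hbl) hwqj
      by_cases hys : R.Incid y s
      · have : y = q := qj_s_unique hl hs hq hqD hql hbl hbs (hgqj ▸ hyg) hys
        exact this ▸ Pset_q
      · exact Pset_main (main_of_qj hl hs hq hqD hql hbl (hgqj ▸ hyg) hys)
    by_cases hu' : u = q
    · exact key v hv hvg (fun e => huv (hu' ▸ e ▸ rfl))
    · exact key u hu hug hu'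
  · by_cases hus : R.Incid u s
    · have hvs : ¬R.Incid v s := by
        intro hvs'
        have : g = s := line_eq_line huv hug hvg hus hvs'
        exact hg (this.symm ▸ hs)
      exact closure2 hl hs hq hqD hql h hg hqg hu hug hus
        (Pset_offs hl hs hq hqD hql hv hvs) hvg hyg
    · by_cases hvs : R.Incid v s
      · exact closure2 hl hs hq hqD hql h hg hqg hv hvg hvs
          (Pset_offs hl hs hq hqD hql hu hus) hug hyg
      · exact closure1 hl hs hq hqD hql hg (Pset_offs hl hs hq hqD hql hu hus)
          (Pset_offs hl hs hq hqD hql hv hvs) huv hug hvg hyg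

end ClosureE
end PR
namespace PR
open Set
set_option linter.unusedSectionVars false
set_option maxHeartbeats 1000000

variable {Point Line : Type} {R : ProjRect Point Line} {m n : ℕ}

section Subplane

variable {l s : Line} (hl : ¬R.Incid R.D l) (hs : R.Incid R.D s)
  {q : Point} (hq : R.Incid q s) (hqD : q ≠ R.D) (hql : ¬R.Incid q l)

include hl hs hq hqD hql

/-- Every line of Lset lies in Pset if ordinary. -/
lemma Lset_full (h : R.HasOrder m n) {g : Line} (hgL : g ∈ Lset R l s q)
    (hg : ¬R.Incid R.D g) {y : Point} (hyg : R.Incid y g) : y ∈ Pset R l s q := by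
  obtain ⟨u, v, huv, hu, hv, hug, hvg⟩ := hgL
  exact closureE hl hs hq hqD hql h hg hu hv huv hug hvg hyg

/-- Axiom 2 for the constructed subplane: lines meet in Pset. -/
lemma Lset_meet (h : R.HasOrder m n) {g g' : Line} (hgL : g ∈ Lset R l s q)
    (hgL' : g' ∈ Lset R l s q) (hne : g ≠ g') :
    ∃ x, x ∈ Pset R l s q ∧ R.Incid x g ∧ R.Incid x g' := by
  by_cases hgD : R.Incid R.D g
  · by_cases hgD' : R.Incid R.D g'
    · exact ⟨R.D, Pset_D, hgD, hgD'⟩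
    · have hx := xpt_spec hgD (Ne.symm hne)
      exact ⟨xpt R hgD (Ne.symm hne), Lset_full hl hs hq hqD hql h hgL' hgD' hx.2,
        hx.1, hx.2⟩
  · by_cases hgD' : R.Incid R.D g'
    · have hx := xpt_spec hgD' hne
      exact ⟨xpt R hgD' hne, Lset_full hl hs hq hqD hql h hgL hgD hx.2, hx.2, hx.1⟩
    · -- both ordinary, both inside Pset
      have hPg : ∀ y, R.Incid y g → y ∈ Pset R l s q :=
        fun y hy => Lset_full hl hs hq hqD hql h hgL hgD hy
      have hPg' : ∀ y, R.Incid y g' → y ∈ Pset R l s q :=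
        fun y hy => Lset_full hl hs hq hqD hql h hgL' hgD' hy
      by_cases hqg : R.Incid q g
      · by_cases hqg' : R.Incid q g'
        · exact ⟨q, Pset_q, hqg, hqg'⟩
        · -- g is a q-line
          obtain ⟨x, x', hxx', hxg, hxg', hxs, hxs'⟩ :=
            exists_two_offs h hs hgD
          have hxq : x ≠ q := fun e => hxs (e ▸ hq)
          obtain ⟨_, _, _, b, hbl, hbs, hxqj⟩ :=
            main_spec hl hs hq hqD hql (Pset_offs hl hs hq hqD hql (hPg x hxg) hxs)
          have hgqj : g = qj R hql hbl := line_eq_line (Ne.symm hxq) hqg hxg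
            (qj_q hql hbl) hxqj
          obtain ⟨t, htg', htqj⟩ :=
            qline_meets hl hs hq hqD hql h hgD' hqg' hPg' hbl hbs
          exact ⟨t, hPg' t htg', hgqj ▸ htqj, htg'⟩
      · by_cases hqg' : R.Incid q g'
        · obtain ⟨x, x', hxx', hxg, hxg', hxs, hxs'⟩ :=
            exists_two_offs h hs hgD'
          have hxq : x ≠ q := fun e => hxs (e ▸ hq)
          obtain ⟨_, _, _, b, hbl, hbs, hxqj⟩ :=
            main_spec hl hs hq hqD hql (Pset_offs hl hs hq hqD hql (hPg' x hxg) hxs)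
          have hgqj : g' = qj R hql hbl := line_eq_line (Ne.symm hxq) hqg' hxg
            (qj_q hql hbl) hxqj
          obtain ⟨t, htg, htqj⟩ :=
            qline_meets hl hs hq hqD hql h hgD hqg hPg hbl hbs
          exact ⟨t, hPg t htg, htg, hgqj ▸ htqj⟩
        · -- neither contains q : A6 with two q-lines
          obtain ⟨x, x', hxx', hxg, hxg', hxs, hxs'⟩ :=
            exists_two_offs h hs hgD
          by_cases hxin : R.Incid x g'
          · exact ⟨x, hPg x hxg, hxg, hxin⟩
          by_cases hxin' : R.Incid x' g'
          · exact ⟨x', hPg x' hxg', hxg', hxin'⟩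
          obtain ⟨_, _, _, b, hbl, hbs, hxqj⟩ :=
            main_spec hl hs hq hqD hql (Pset_offs hl hs hq hqD hql (hPg x hxg) hxs)
          obtain ⟨_, _, _, b', hbl', hbs', hxqj'⟩ :=
            main_spec hl hs hq hqD hql (Pset_offs hl hs hq hqD hql (hPg x' hxg') hxs')
          have hl1l2 : qj R hql hbl ≠ qj R hql hbl' := by
            intro e
            have : g = qj R hql hbl := line_eq_line hxx' hxg hxg' hxqj (e ▸ hxqj')
            exact hqg (this.symm ▸ qj_q hql hbl)
          obtain ⟨y1, hy1g', hy1qj⟩ :=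
            qline_meets hl hs hq hqD hql h hgD' hqg' hPg' hbl hbs
          obtain ⟨y2, hy2g', hy2qj⟩ :=
            qline_meets hl hs hq hqD hql h hgD' hqg' hPg' hbl' hbs'
          by_cases hy1g : R.Incid y1 g
          · exact ⟨y1, hPg y1 hy1g, hy1g, hy1g'⟩
          by_cases hy2g : R.Incid y2 g
          · exact ⟨y2, hPg y2 hy2g, hy2g, hy2g'⟩
          obtain ⟨t, htg, htg'⟩ := R.A6 (qj R hql hbl) (qj R hql hbl') g g' q x y1 x' y2
            (qj_ord hl hs hq hqD hql hbl hbs) (qj_ord hl hs hq hqD hql hbl' hbs')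
            hl1l2 (qj_q hql hbl) (qj_q hql hbl') hne
            hxqj hxg hy1qj hy1g' hxqj' hxg' hy2qj hy2g'
            (fun e => hy1g (e ▸ hxg)) hxx' (fun e => hy2g (e ▸ hxg))
            (fun e => hy1g (e.symm ▸ hxg')) (fun e => hqg' (by
              have : y1 = q := eq_pt_of_two_lines hl1l2 hy1qj (e ▸ hy2qj)
                (qj_q hql hbl) (qj_q hql hbl')
              exact this ▸ hy1g'))
            (fun e => hy2g (e ▸ hxg'))
          exact ⟨t, hPg t htg, htg, htg'⟩

end Subplane
end PR
namespace PR
open Set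
set_option linter.unusedSectionVars false
set_option maxHeartbeats 1000000

variable {Point Line : Type} {R : ProjRect Point Line} {m n : ℕ}

/-- A third point on a line, avoiding two given points. -/
lemma exists_third (R : ProjRect Point Line) (g : Line) (x1 x2 : Point) :
    ∃ u, R.Incid u g ∧ u ≠ x1 ∧ u ≠ x2 := by
  obtain ⟨a, b, c, hab, hac, hbc, ha, hb, hc⟩ := R.A3 g
  by_cases ha1 : a = x1
  · subst ha1
    by_cases hb2 : b = x2
    · subst hb2
      exact ⟨c, hc, Ne.symm hac, Ne.symm hbc⟩
    · exact ⟨b, hb, Ne.symm hab, hb2⟩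
  · by_cases ha2 : a = x2
    · subst ha2
      by_cases hb1 : b = x1
      · subst hb1
        exact ⟨c, hc, Ne.symm hbc, Ne.symm hac⟩
      · exact ⟨b, hb, hb1, Ne.symm hab⟩
    · exact ⟨a, ha, ha1, ha2⟩

section IsPlane

variable {l s : Line} (hl : ¬R.Incid R.D l) (hs : R.Incid R.D s)
  {q : Point} (hq : R.Incid q s) (hqD : q ≠ R.D) (hql : ¬R.Incid q l)

include hl hs hq hqD hql

lemma l_mem_Lset (h : R.HasOrder m n) : l ∈ Lset R l s q := by
  obtain ⟨a, hal, has⟩ := exists_offs_pt h hs hl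
  have hp := xpt_spec hs (ord_ne_spec hl hs)
  refine ⟨a, xpt R hs (ord_ne_spec hl hs), ?_, Pset_l hal, Pset_l hp.2, hal, hp.2⟩
  exact fun e => has (e ▸ hp.1)

lemma constructed_isSubplane (h : R.HasOrder m n) :
    R.IsSubplane (Pset R l s q) (Lset R l s q) := by
  refine ⟨?_, ?_, ?_⟩
  · -- join axiom
    intro u v hu hv huv
    refine ⟨join_s15 R huv, ⟨⟨u, v, huv, hu, hv, join_left huv, join_right huv⟩,
      join_left huv, join_right huv⟩, ?_⟩
    rintro g ⟨_, hug, hvg⟩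
    exact (join_unique huv hug hvg)
  · -- meet axiom
    intro g g' hgL hgL' hne
    exact Lset_meet hl hs hq hqD hql h hgL hgL' hne
  · -- quadrilateral
    obtain ⟨a1, ha1l, ha1s⟩ := exists_offs_pt h hs hl
    set p := xpt R hs (ord_ne_spec hl hs) with hpdef
    have hp := xpt_spec hs (ord_ne_spec hl hs)
    obtain ⟨u1, hu1, hu1q, hu1a⟩ := exists_third R (qj R hql ha1l) q a1
    have hu1s : ¬R.Incid u1 s := fun h' =>
      hu1q (qj_s_unique hl hs hq hqD hql ha1l ha1s hu1 h')
    have hu1M : u1 ∈ Main R l s q := main_of_qj hl hs hq hqD hql ha1l hu1 hu1s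
    have hu1l : ¬R.Incid u1 l := by
      intro h'
      exact hu1a (qj_l_unique hl hs hq hqD hql ha1l hu1 h')
    have hpD : p ≠ R.D := ne_D_of_ord hl hp.2
    have ha1p : a1 ≠ p := fun e => ha1s (e ▸ hp.1)
    refine ⟨R.D, a1, u1, p, Pset_D, Pset_l ha1l, Pset_main hu1M, Pset_l hp.2,
      (fun e => hl (by rw [e]; exact ha1l)),
      Ne.symm (main_spec hl hs hq hqD hql hu1M).2.2.1,
      Ne.symm hpD, Ne.symm hu1a, ha1p,
      (fun e => hu1s (by rw [e]; exact hp.1)), ?_, ?_, ?_, ?_⟩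
    · rintro g hgL ⟨hDg, ha1g, hu1g⟩
      have : g = qj R hql ha1l := line_eq_line (Ne.symm hu1a) ha1g hu1g
        (qj_b hql ha1l) hu1
      exact qj_ord hl hs hq hqD hql ha1l ha1s (this ▸ hDg)
    · rintro g hgL ⟨hDg, ha1g, hpg⟩
      have : g = l := line_eq_line ha1p ha1g hpg ha1l hp.2
      exact hl (this ▸ hDg)
    · rintro g hgL ⟨hDg, hu1g, hpg⟩
      have : g = s := line_eq_line (Ne.symm hpD) hDg hpg hs hp.1
      exact hu1s (this ▸ hu1g)
    · rintro g hgL ⟨ha1g, hu1g, hpg⟩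
      have : g = qj R hql ha1l := line_eq_line (Ne.symm hu1a) ha1g hu1g
        (qj_b hql ha1l) hu1
      exact ha1p (qj_l_unique hl hs hq hqD hql ha1l (this ▸ hpg) hp.2).symm

lemma constructed_isFull (h : R.HasOrder m n) :
    R.IsFull (Pset R l s q) (Lset R l s q) := by
  intro g hgL hgord y hy
  exact Lset_full hl hs hq hqD hql h hgL hgord hy

end IsPlane
end PR
namespace PR
open Set
set_option linter.unusedSectionVars false
set_option maxHeartbeats 1000000

variable {Point Line : Type} {R : ProjRect Point Line} {m n : ℕ}

section Unique

variable {l s : Line} (hl : ¬R.Incid R.D l) (hs : R.Incid R.D s)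
  {P' : Set Point} {L' : Set Line} (hsp : R.IsSubplane P' L') (hfull : R.IsFull P' L')
  (hlL : l ∈ L')

include hl hs hsp hfull hlL

/-- The joining line of two subplane points is a subplane line. -/
lemma pi_join {u v : Point} (hu : u ∈ P') (hv : v ∈ P') (huv : u ≠ v) :
    join_s15 R huv ∈ L' := by
  obtain ⟨g, ⟨hgL, hug, hvg⟩, _⟩ := hsp.1 u v hu hv huv
  have : g = join_s15 R huv := join_unique huv hug hvg
  exact this ▸ hgL

lemma pi_lpts {x : Point} (hx : R.Incid x l) : x ∈ P' := hfull l hlL hl x hx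

/-- There is a subplane point off l, different from D. -/
lemma pi_offl2 : ∃ x, x ∈ P' ∧ ¬R.Incid x l ∧ x ≠ R.D := by
  obtain ⟨a, b, c, d, haP, hbP, hcP, hdP, hab, hac, had, hbc, hbd, hcd,
    habc, habd, hacd, hbcd⟩ := hsp.2.2
  by_cases hal : R.Incid a l
  · by_cases hbl : R.Incid b l
    · have hcl : ¬R.Incid c l := fun hcl => habc l hlL ⟨hal, hbl, hcl⟩
      have hdl : ¬R.Incid d l := fun hdl => habd l hlL ⟨hal, hbl, hdl⟩
      by_cases hcD : c = R.D
      · exact ⟨d, hdP, hdl, fun e => hcd (hcD.trans e.symm)⟩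
      · exact ⟨c, hcP, hcl, hcD⟩
    · by_cases hbD : b = R.D
      · by_cases hcl : R.Incid c l
        · have hdl : ¬R.Incid d l := fun hdl => hacd l hlL ⟨hal, hcl, hdl⟩
          exact ⟨d, hdP, hdl, fun e => hbd (hbD.trans e.symm)⟩
        · exact ⟨c, hcP, hcl, fun e => hbc (hbD.trans e.symm)⟩
      · exact ⟨b, hbP, hbl, hbD⟩
  · by_cases haD : a = R.D
    · by_cases hbl : R.Incid b l
      · by_cases hcl : R.Incid c l
        · have hdl : ¬R.Incid d l := fun hdl => hbcd l hlL ⟨hbl, hcl, hdl⟩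
          exact ⟨d, hdP, hdl, fun e => had (haD.trans e.symm)⟩
        · exact ⟨c, hcP, hcl, fun e => hac (haD.trans e.symm)⟩
      · exact ⟨b, hbP, hbl, fun e => hab (haD.trans e.symm)⟩
    · exact ⟨a, haP, hal, haD⟩

/-- D belongs to the subplane. -/
lemma pi_D : R.D ∈ P' := by
  obtain ⟨x, hxP, hxl, hxD⟩ := pi_offl2 hl hs hsp hfull hlL
  -- the special line through x is a subplane line
  have hkey : ∀ x' : Point, x' ∈ P' → ¬R.Incid x' l → ∀ hx'D : x' ≠ R.D,
      sl R hx'D ∈ L' := by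
    intro x' hx'P hx'l hx'D
    have hls : l ≠ sl R hx'D := ord_ne_spec hl (sl_D hx'D)
    set y := xpt R (sl_D hx'D) hls with hy
    have hysp := xpt_spec (sl_D hx'D) hls
    have hxy : x' ≠ y := fun e => hx'l (e ▸ hysp.2)
    have : sl R hx'D = join_s15 R hxy := join_unique hxy (sl_incid hx'D) hysp.1
    rw [this]
    exact pi_join hl hs hsp hfull hlL hx'P (pi_lpts hl hs hsp hfull hlL hysp.2) hxy
  have hs1 : sl R hxD ∈ L' := hkey x hxP hxl hxD
  -- a point of l off sl x
  have hls : l ≠ sl R hxD := ord_ne_spec hl (sl_D hxD)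
  set y := xpt R (sl_D hxD) hls with hy
  have hysp := xpt_spec (sl_D hxD) hls
  obtain ⟨a, hal, hay, _⟩ := exists_third R l y y
  have haslx : ¬R.Incid a (sl R hxD) := fun h' =>
    hay (xpt_unique (sl_D hxD) hls h' hal)
  have hxa : x ≠ a := fun e => hxl (e ▸ hal)
  have hlam : join_s15 R hxa ∈ L' :=
    pi_join hl hs hsp hfull hlL hxP (pi_lpts hl hs hsp hfull hlL hal) hxa
  have hlamord : ¬R.Incid R.D (join_s15 R hxa) := by
    intro hD
    have : join_s15 R hxa = sl R hxD :=
      line_eq_line hxD (join_left hxa) hD (sl_incid hxD) (sl_D hxD)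
    exact haslx (this ▸ join_right hxa)
  obtain ⟨y', hy'lam, hy'x, hy'a⟩ := exists_third R (join_s15 R hxa) x a
  have hy'P : y' ∈ P' := hfull _ hlam hlamord y' hy'lam
  have hy'l : ¬R.Incid y' l := by
    intro h'
    have hlaml : join_s15 R hxa ≠ l := fun e => hxl (e ▸ join_left hxa)
    exact hy'a (eq_pt_of_two_lines hlaml hy'lam h' (join_right hxa) hal)
  have hy'D : y' ≠ R.D := ne_D_of_ord hlamord hy'lam
  have hy'slx : ¬R.Incid y' (sl R hxD) := by
    intro h'
    have hne : join_s15 R hxa ≠ sl R hxD := fun e => haslx (e ▸ join_right hxa)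
    exact hy'x (eq_pt_of_two_lines hne hy'lam h' (join_left hxa) (sl_incid hxD))
  have hs2 : sl R hy'D ∈ L' := hkey y' hy'P hy'l hy'D
  have hss : sl R hy'D ≠ sl R hxD := fun e => hy'slx (e ▸ sl_incid hy'D)
  obtain ⟨w, hwP, hw1, hw2⟩ := hsp.2.1 _ _ hs2 hs1 hss
  have : w = R.D := eq_pt_of_two_lines hss hw1 hw2 (sl_D hy'D) (sl_D hxD)
  exact this ▸ hwP

/-- s belongs to the subplane lines. -/
lemma pi_s : s ∈ L' := by
  have hls : l ≠ s := ord_ne_spec hl hs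
  have hpsp := xpt_spec hs hls
  have hpD : xpt R hs hls ≠ R.D := ne_D_of_ord hl hpsp.2
  have : s = join_s15 R hpD := join_unique hpD hpsp.1 hs
  rw [this]
  exact pi_join hl hs hsp hfull hlL (pi_lpts hl hs hsp hfull hlL hpsp.2)
    (pi_D hl hs hsp hfull hlL) hpD

/-- There is a subplane point off l and off s. -/
lemma pi_offls : ∃ x, x ∈ P' ∧ ¬R.Incid x l ∧ ¬R.Incid x s ∧ x ≠ R.D := by
  obtain ⟨x, hxP, hxl, hxD⟩ := pi_offl2 hl hs hsp hfull hlL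
  by_cases hxs : R.Incid x s
  · -- pick a point a of l off s, and a third point on the line x a
    have hls : l ≠ s := ord_ne_spec hl hs
    have hpsp := xpt_spec hs hls
    obtain ⟨a, hal, hap, _⟩ := exists_third R l (xpt R hs hls) (xpt R hs hls)
    have has : ¬R.Incid a s := fun h' => hap (xpt_unique hs hls h' hal)
    have hxa : x ≠ a := fun e => has (e ▸ hxs)
    have hlam : join_s15 R hxa ∈ L' :=
      pi_join hl hs hsp hfull hlL hxP (pi_lpts hl hs hsp hfull hlL hal) hxa
    have hlamord : ¬R.Incid R.D (join_s15 R hxa) := by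
      intro hD
      have : join_s15 R hxa = s := line_eq_line hxD (join_left hxa) hD hxs hs
      exact has (this ▸ join_right hxa)
    obtain ⟨y, hylam, hyx, hya⟩ := exists_third R (join_s15 R hxa) x a
    have hyP : y ∈ P' := hfull _ hlam hlamord y hylam
    have hyl : ¬R.Incid y l := by
      intro h'
      have hlaml : join_s15 R hxa ≠ l := fun e => hxl (e ▸ join_left hxa)
      exact hya (eq_pt_of_two_lines hlaml hylam h' (join_right hxa) hal)
    have hys : ¬R.Incid y s := by
      intro h'
      have hlams : join_s15 R hxa ≠ s := ord_ne_spec hlamord hs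
      exact hyx (eq_pt_of_two_lines hlams hylam h' (join_left hxa) hxs)
    exact ⟨y, hyP, hyl, hys, ne_D_of_ord hlamord hylam⟩
  · exact ⟨x, hxP, hxl, hxs, hxD⟩

/-- The subplane has a point on s other than D and off l. -/
lemma pi_trace_nonempty (h : R.HasOrder m n) :
    ∃ z, z ∈ P' ∧ R.Incid z s ∧ z ≠ R.D ∧ ¬R.Incid z l := by
  obtain ⟨x, hxP, hxl, hxs, hxD⟩ := pi_offls hl hs hsp hfull hlL
  obtain ⟨a, hal, has, haslx⟩ := exists_offs_two_lines h hs (sl_D hxD) hl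
  have hxa : x ≠ a := fun e => hxl (e.symm ▸ hal)
  have hlam : join_s15 R hxa ∈ L' :=
    pi_join hl hs hsp hfull hlL hxP (pi_lpts hl hs hsp hfull hlL hal) hxa
  have hlamord : ¬R.Incid R.D (join_s15 R hxa) := by
    intro hD
    have : join_s15 R hxa = sl R hxD :=
      line_eq_line hxD (join_left hxa) hD (sl_incid hxD) (sl_D hxD)
    exact haslx (this ▸ join_right hxa)
  have hlams : join_s15 R hxa ≠ s := ord_ne_spec hlamord hs
  have hz := xpt_spec hs hlams
  set z := xpt R hs hlams with hzdef
  refine ⟨z, hfull _ hlam hlamord z hz.2, hz.1, ne_D_of_ord hlamord hz.2, ?_⟩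
  intro hzl
  have hlaml : join_s15 R hxa ≠ l := fun e => hxl (e ▸ join_left hxa)
  have : z = a := eq_pt_of_two_lines hlaml hz.2 hzl (join_right hxa) hal
  exact has (this ▸ hz.1)

/-- Any subplane point off s is a Main point. -/
lemma pi_main_offs {q : Point} (hq : R.Incid q s) (hqD : q ≠ R.D) (hql : ¬R.Incid q l)
    (hqP : q ∈ P') {x : Point} (hxP : x ∈ P') (hxs : ¬R.Incid x s) :
    x ∈ Main R l s q := by
  by_cases hxl : R.Incid x l
  · exact lpt_main hl hs hq hqD hql hxl hxs
  · have hqx : q ≠ x := fun e => hxs (e ▸ hq)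
    have hlam : join_s15 R hqx ∈ L' := pi_join hl hs hsp hfull hlL hqP hxP hqx
    have hlaml : join_s15 R hqx ≠ l := fun e => hql (e ▸ join_left hqx)
    obtain ⟨w, hwP, hwlam, hwl⟩ := hsp.2.1 _ _ hlam hlL hlaml
    exact ⟨hxs, join_s15 R hqx, join_left hqx, join_right hqx, w, hwlam, hwl⟩

/-- A full subplane containing l equals the constructed one, on points. -/
lemma pi_eq_P (h : R.HasOrder m n) {q : Point} (hq : R.Incid q s) (hqD : q ≠ R.D)
    (hql : ¬R.Incid q l) (hqP : q ∈ P') : P' = Pset R l s q := by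
  apply Set.Subset.antisymm
  · -- P' ⊆ Pset
    intro x hxP
    by_cases hxs : R.Incid x s
    · by_cases hxq : x = q
      · exact hxq ▸ Pset_q
      by_cases hxD : x = R.D
      · exact hxD ▸ Pset_D
      by_cases hxl : R.Incid x l
      · exact Pset_l hxl
      -- x is a Zset point
      obtain ⟨a, hal, has⟩ := exists_offs_pt h hs hl
      have hxa : x ≠ a := fun e => has (e ▸ hxs)
      have hlam : join_s15 R hxa ∈ L' :=
        pi_join hl hs hsp hfull hlL hxP (pi_lpts hl hs hsp hfull hlL hal) hxa
      have hlamord : ¬R.Incid R.D (join_s15 R hxa) := by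
        intro hD
        have : join_s15 R hxa = s := line_eq_line (fun e => hxD e) (join_left hxa) hD hxs hs
        exact has (this ▸ join_right hxa)
      obtain ⟨u, v, huv, hulam, hvlam, hus, hvs⟩ := exists_two_offs h hs hlamord
      have huP : u ∈ P' := hfull _ hlam hlamord u hulam
      have hvP : v ∈ P' := hfull _ hlam hlamord v hvlam
      exact Pset_z ⟨hxs, hxD, hxq, hxl, u, v, join_s15 R hxa, huv,
        pi_main_offs hl hs hsp hfull hlL hq hqD hql hqP huP hus,
        pi_main_offs hl hs hsp hfull hlL hq hqD hql hqP hvP hvs,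
        join_left hxa, hulam, hvlam⟩
    · exact Pset_main (pi_main_offs hl hs hsp hfull hlL hq hqD hql hqP hxP hxs)
  · -- Pset ⊆ P'
    intro x hx
    have hmainP : ∀ y, y ∈ Main R l s q → y ∈ P' := by
      intro y hy
      obtain ⟨hys, hyq, hyD, b, hbl, hbs, hyqj⟩ := main_spec hl hs hq hqD hql hy
      have : qj R hql hbl ∈ L' :=
        pi_join hl hs hsp hfull hlL hqP (pi_lpts hl hs hsp hfull hlL hbl)
          (q_ne_lpt' hql hbl)
      exact hfull _ this (qj_ord hl hs hq hqD hql hbl hbs) y hyqj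
    rcases Pset_cases hx with rfl | hxl | rfl | hxM | hxZ
    · exact pi_D hl hs hsp hfull hlL
    · exact pi_lpts hl hs hsp hfull hlL hxl
    · exact hqP
    · exact hmainP x hxM
    · obtain ⟨hxs, hxD, hxq, hxl, u, v, g', huv, hu, hv, hxg, hug, hvg⟩ := hxZ
      have hup : u ∈ P' := hmainP u hu
      have hvp : v ∈ P' := hmainP v hv
      have hg'j : g' = join_s15 R huv := join_unique huv hug hvg
      have hg'L : g' ∈ L' := hg'j ▸ pi_join hl hs hsp hfull hlL hup hvp huv
      have hg'ord : ¬R.Incid R.D g' := by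
        intro hD
        have : g' = s := line_eq_line hxD hxg hD hxs hs
        exact (main_spec hl hs hq hqD hql hu).1 (this ▸ hug)
      exact hfull _ hg'L hg'ord x hxg

/-- A full subplane containing l equals the constructed one, on lines. -/
lemma pi_eq_L (h : R.HasOrder m n) {q : Point} (hq : R.Incid q s) (hqD : q ≠ R.D)
    (hql : ¬R.Incid q l) (hqP : q ∈ P') : L' = Lset R l s q := by
  have hPeq := pi_eq_P hl hs hsp hfull hlL h hq hqD hql hqP
  apply Set.Subset.antisymm
  · -- L' ⊆ Lset : find two distinct Pset points on any subplane line
    intro g hgL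
    obtain ⟨a, hal, has⟩ := exists_offs_pt h hs hl
    have hls : l ≠ s := ord_ne_spec hl hs
    have hpsp := xpt_spec hs hls
    set p := xpt R hs hls with hpdef
    have hap : a ≠ p := fun e => has (e ▸ hpsp.1)
    by_cases hgl : g = l
    · exact ⟨a, p, hap, Pset_l hal, Pset_l hpsp.2, hgl ▸ hal, hgl ▸ hpsp.2⟩
    by_cases hgs : g = s
    · exact ⟨p, R.D, ne_D_of_ord hl hpsp.2, Pset_l hpsp.2, Pset_D,
        hgs ▸ hpsp.1, hgs ▸ hs⟩
    by_cases hgqj : g = qj R hql hal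
    · exact ⟨q, a, q_ne_lpt' hql hal, Pset_q, Pset_l hal,
        hgqj ▸ qj_q hql hal, hgqj ▸ qj_b hql hal⟩
    have hsL : s ∈ L' := pi_s hl hs hsp hfull hlL
    have hqjL : qj R hql hal ∈ L' :=
      pi_join hl hs hsp hfull hlL hqP (pi_lpts hl hs hsp hfull hlL hal)
        (q_ne_lpt' hql hal)
    obtain ⟨x1, hx1P, hx1g, hx1l⟩ := hsp.2.1 g l hgL hlL hgl
    obtain ⟨x2, hx2P, hx2g, hx2s⟩ := hsp.2.1 g s hgL hsL hgs
    obtain ⟨x3, hx3P, hx3g, hx3qj⟩ := hsp.2.1 g (qj R hql hal) hgL hqjL hgqj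
    by_cases h12 : x1 = x2
    · by_cases h31 : x3 = x1
      · exfalso
        have hx3l : R.Incid x3 l := h31 ▸ hx1l
        have : x3 = a := qj_l_unique hl hs hq hqD hql hal hx3qj hx3l
        have hx3s : R.Incid x3 s := h31 ▸ h12 ▸ hx2s
        exact has (this ▸ hx3s)
      · exact ⟨x3, x1, h31, hPeq ▸ hx3P, hPeq ▸ hx1P, hx3g, hx1g⟩
    · exact ⟨x1, x2, h12, hPeq ▸ hx1P, hPeq ▸ hx2P, hx1g, hx2g⟩
  · -- Lset ⊆ L'
    rintro g ⟨u, v, huv, hu, hv, hug, hvg⟩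
    have hup : u ∈ P' := hPeq.symm ▸ hu
    have hvp : v ∈ P' := hPeq.symm ▸ hv
    have : g = join_s15 R huv := join_unique huv hug hvg
    exact this ▸ pi_join hl hs hsp hfull hlL hup hvp huv

end Unique
end PR
namespace PR
open Set
set_option linter.unusedSectionVars false
set_option maxHeartbeats 1000000

variable {Point Line : Type} {R : ProjRect Point Line} {m n : ℕ}

section Trace

variable {l s : Line} (hl : ¬R.Incid R.D l) (hs : R.Incid R.D s)
  {q : Point} (hq : R.Incid q s) (hqD : q ≠ R.D) (hql : ¬R.Incid q l)

include hl hs hq hqD hql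

/-- The trace of the constructed subplane on s, minus D and p, has m - 1 points. -/
lemma trace_card (h : R.HasOrder m n) :
    {x | R.Incid x s ∧ x ≠ R.D ∧ ¬R.Incid x l ∧ x ∈ Pset R l s q}.ncard = m - 1 := by
  classical
  set Tr := {x | R.Incid x s ∧ x ≠ R.D ∧ ¬R.Incid x l ∧ x ∈ Pset R l s q} with hTr
  obtain ⟨a1, a2, ha12, ha1l, ha2l, ha1s, ha2s⟩ := exists_two_offs h hs hl
  have ha1D : a1 ≠ R.D := ne_D_of_ord hl ha1l
  have hqj2ord : ¬R.Incid R.D (qj R hql ha2l) := qj_ord hl hs hq hqD hql ha2l ha2s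
  have hne : qj R hql ha2l ≠ sl R ha1D := ord_ne_spec hqj2ord (sl_D ha1D)
  set x' := xpt R (sl_D ha1D) hne with hx'def
  have hx' := xpt_spec (sl_D ha1D) hne
  have hlsa1 : l ≠ sl R ha1D := ord_ne_spec hl (sl_D ha1D)
  have hssa1 : s ≠ sl R ha1D := fun e => ha1s (e ▸ sl_incid ha1D)
  have ha1qj2 : ¬R.Incid a1 (qj R hql ha2l) := by
    intro h'
    exact ha12 (qj_l_unique hl hs hq hqD hql ha2l h' ha1l)
  have hx'a2 : a2 ≠ x' := by
    intro e
    have : R.Incid a2 (sl R ha1D) := e ▸ hx'.1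
    exact ha12 (eq_pt_of_two_lines hlsa1 ha1l (sl_incid ha1D) ha2l this)
  -- the predicate underlying φ
  set Q : Point → Point → Prop := fun x t => R.Incid t (qj R hql ha2l) ∧
    ∃ g : Line, R.Incid a1 g ∧ R.Incid x g ∧ R.Incid t g with hQ
  have hTrcases : ∀ x ∈ Tr, x = q ∨ x ∈ Zset R l s q := by
    rintro x ⟨hxs, hxD, hxl, hxP⟩
    rcases Pset_cases hxP with rfl | h2 | rfl | h4 | h5
    · exact absurd rfl hxD
    · exact absurd h2 hxl
    · exact Or.inl rfl
    · exact absurd hxs h4.1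
    · exact Or.inr h5
  have hexQ : ∀ x ∈ Tr, ∃ t, Q x t := by
    intro x hx
    rcases hTrcases x hx with hxq | hxZ
    · refine ⟨q, qj_q hql ha2l, qj R hql ha1l, qj_b hql ha1l, ?_, qj_q hql ha1l⟩
      rw [hxq]
      exact qj_q hql ha1l
    · have hxs := hxZ.1
      have hxD := hxZ.2.1
      have hxq := hxZ.2.2.1
      have hxl := hxZ.2.2.2.1
      have ha1x : a1 ≠ x := fun e => ha1s (e ▸ hxs)
      have hlamord : ¬R.Incid R.D (join_s15 R ha1x) := by
        intro hD
        have : join_s15 R ha1x = s := line_eq_line hxD (join_right ha1x) hD hxs hs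
        exact ha1s (this ▸ join_left ha1x)
      have hqlam : ¬R.Incid q (join_s15 R ha1x) := by
        intro hq'
        have : join_s15 R ha1x = s := line_eq_line (Ne.symm hxq) hq' (join_right ha1x) hq hxs
        exact ha1s (this ▸ join_left ha1x)
      have hgP : ∀ y, R.Incid y (join_s15 R ha1x) → y ∈ Pset R l s q := fun y hy =>
        closure3 hl hs hq hqD hql h hlamord hxZ
          (lpt_main hl hs hq hqD hql ha1l ha1s) (join_right ha1x) (join_left ha1x) hy
      obtain ⟨t, htlam, htqj⟩ :=
        qline_meets hl hs hq hqD hql h hlamord hqlam hgP ha2l ha2s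
      exact ⟨t, htqj, join_s15 R ha1x, join_left ha1x, join_right ha1x, htlam⟩
  set φ : Point → Point := fun x => if hx : ∃ t, Q x t then hx.choose else x with hφ
  have hφQ : ∀ x ∈ Tr, Q x (φ x) := by
    intro x hx
    have := hexQ x hx
    simp only [hφ, dif_pos this]
    exact this.choose_spec
  have hφa1 : ∀ x ∈ Tr, φ x ≠ a1 := by
    intro x hx e
    exact ha1qj2 (e ▸ (hφQ x hx).1)
  have hinj : Set.InjOn φ Tr := by
    intro x hx x2 hx2 he
    obtain ⟨ht1, g, hg1, hg2, hg3⟩ := hφQ x hx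
    obtain ⟨ht1', g', hg1', hg2', hg3'⟩ := hφQ x2 hx2
    rw [he] at hg3
    have hta1 : a1 ≠ φ x2 := Ne.symm (hφa1 x2 hx2)
    have hgg : g = g' := line_eq_line hta1 hg1 hg3 hg1' hg3'
    have hgs : g ≠ s := fun e => ha1s (e ▸ hg1)
    exact eq_pt_of_two_lines hgs hg2 hx.1 (hgg ▸ hg2') hx2.1
  have himg : φ '' Tr = (pts R (qj R hql ha2l) \ {a2}) \ {x'} := by
    apply Set.Subset.antisymm
    · rintro t ⟨x, hx, rfl⟩
      obtain ⟨ht1, g, hg1, hg2, hg3⟩ := hφQ x hx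
      obtain ⟨hxs, hxD, hxl, hxP⟩ := hx
      refine ⟨⟨ht1, ?_⟩, ?_⟩
      · intro e
        rw [Set.mem_singleton_iff] at e
        have ha2g : R.Incid a2 g := e ▸ hg3
        have : g = l := line_eq_line ha12 hg1 ha2g ha1l ha2l
        exact hxl (this ▸ hg2)
      · intro e
        rw [Set.mem_singleton_iff] at e
        have hx'g : R.Incid x' g := e ▸ hg3
        have ha1x' : a1 ≠ x' := by
          intro e'
          exact ha1qj2 (e' ▸ hx'.2)
        have : g = sl R ha1D := line_eq_line ha1x' hg1 hx'g (sl_incid ha1D) hx'.1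
        have hxsl : R.Incid x (sl R ha1D) := this ▸ hg2
        exact hxD (eq_pt_of_two_lines hssa1 hxs hxsl hs (sl_D ha1D))
    · rintro y ⟨⟨hyqj, hya2⟩, hyx'⟩
      rw [Set.mem_singleton_iff] at hya2 hyx'
      have ha1y : a1 ≠ y := fun e => ha1qj2 (e ▸ hyqj)
      set g := join_s15 R ha1y with hgdef
      have hgs : g ≠ s := fun e => ha1s (e ▸ join_left ha1y)
      have hx := xpt_spec hs hgs
      set x := xpt R hs hgs with hxdef
      have hgl : g ≠ l := by
        intro e
        exact hya2 (qj_l_unique hl hs hq hqD hql ha2l hyqj (e ▸ join_right ha1y))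
      have hxD : x ≠ R.D := by
        intro e
        have hDg : R.Incid R.D g := e ▸ hx.2
        have : g = sl R ha1D := line_eq_line ha1D (join_left ha1y) hDg
          (sl_incid ha1D) (sl_D ha1D)
        exact hyx' (xpt_unique (sl_D ha1D) hne (this ▸ join_right ha1y) hyqj)
      have hxl : ¬R.Incid x l := by
        intro h'
        have : x = a1 := eq_pt_of_two_lines hgl hx.2 h' (join_left ha1y) ha1l
        exact ha1s (this ▸ hx.1)
      have hxP : x ∈ Pset R l s q := by
        by_cases hxq : x = q
        · exact hxq ▸ Pset_q
        · have hys : ¬R.Incid y s := by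
            intro hys'
            have hyq : y = q := qj_s_unique hl hs hq hqD hql ha2l ha2s hyqj hys'
            have hqg : R.Incid q g := hyq ▸ join_right ha1y
            exact hxq (eq_pt_of_two_lines hgs hx.2 hx.1 hqg hq)
          exact Pset_z ⟨hx.1, hxD, hxq, hxl, a1, y, g, ha1y,
            lpt_main hl hs hq hqD hql ha1l ha1s,
            main_of_qj hl hs hq hqD hql ha2l hyqj hys,
            hx.2, join_left ha1y, join_right ha1y⟩
      have hxTr : x ∈ Tr := ⟨hx.1, hxD, hxl, hxP⟩
      refine ⟨x, hxTr, ?_⟩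
      obtain ⟨ht1, g', hg1', hg2', hg3'⟩ := hφQ x hxTr
      have hxa1 : a1 ≠ x := fun e => ha1s (e ▸ hx.1)
      have hgg : g' = g := line_eq_line hxa1 hg1' hg2' (join_left ha1y) hx.2
      have hgqj : g ≠ qj R hql ha2l := fun e => ha1qj2 (e ▸ join_left ha1y)
      exact eq_pt_of_two_lines hgqj (hgg ▸ hg3') ht1 (join_right ha1y) hyqj
  -- cardinalities
  have hfin : (pts R (qj R hql ha2l)).Finite := pts_ord_finite h hqj2ord
  have hcount : ((pts R (qj R hql ha2l) \ {a2}) \ {x'}).ncard = m - 1 := by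
    rw [Set.ncard_diff_singleton_of_mem
      (show x' ∈ pts R (qj R hql ha2l) \ {a2} from
        ⟨hx'.2, fun e => hx'a2 (Set.mem_singleton_iff.1 e).symm⟩),
      Set.ncard_diff_singleton_of_mem (show a2 ∈ pts R (qj R hql ha2l) from qj_b hql ha2l), card_pts_ord h hqj2ord]
    omega
  rw [← Set.ncard_image_of_injOn hinj, himg, hcount]

end Trace
end PR
namespace PR
open Set
set_option linter.unusedSectionVars false
set_option maxHeartbeats 1000000

variable {Point Line : Type} {R : ProjRect Point Line} {m n : ℕ}

lemma exists_special (R : ProjRect Point Line) : ∃ s : Line, R.Incid R.D s := by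
  obtain ⟨a, b, c, d, hab, _⟩ := R.A2
  by_cases haD : a = R.D
  · have hbD : b ≠ R.D := fun e => hab (haD.trans e.symm)
    exact ⟨sl R hbD, sl_D hbD⟩
  · exact ⟨sl R haD, sl_D haD⟩

end PR

theorem stmt_15' {Point Line : Type} (R : ProjRect Point Line) (m n : ℕ)
    (h : R.HasOrder m n) (l : Line) (hl : ¬R.Incid R.D l) :
    (m - 1) ∣ (n - 1) ∧
    Set.ncard {π : Set Point × Set Line |
      R.IsSubplane π.1 π.2 ∧ R.IsFull π.1 π.2 ∧ l ∈ π.2} = (n - 1) / (m - 1) := by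
  classical
  open PR in
  obtain ⟨s, hs⟩ := PR.exists_special R
  have hls : l ≠ s := PR.ord_ne_spec hl hs
  have hp := PR.xpt_spec hs hls
  set p := PR.xpt R hs hls with hpdef
  have hpD : p ≠ R.D := PR.ne_D_of_ord hl hp.2
  set Dom : Set Point := {x | R.Incid x s ∧ x ≠ R.D ∧ ¬R.Incid x l} with hDom
  set Planes : Set (Set Point × Set Line) :=
    {π : Set Point × Set Line | R.IsSubplane π.1 π.2 ∧ R.IsFull π.1 π.2 ∧ l ∈ π.2}
    with hPlanes
  set F : Point → Set Point × Set Line :=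
    fun q => (PR.Pset R l s q, PR.Lset R l s q) with hF
  -- Dom cardinality
  have hDomEq : Dom = (PR.pts R s \ {R.D}) \ {p} := by
    ext x
    simp only [hDom, Set.mem_setOf_eq, Set.mem_diff, PR.mem_pts, Set.mem_singleton_iff]
    constructor
    · rintro ⟨hxs, hxD, hxl⟩
      exact ⟨⟨hxs, hxD⟩, fun e => hxl (e ▸ hp.2)⟩
    · rintro ⟨⟨hxs, hxD⟩, hxp⟩
      refine ⟨hxs, hxD, fun hxl => hxp ?_⟩
      exact PR.eq_pt_of_two_lines hls hxl hxs hp.2 hp.1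
  have hsfin : (PR.pts R s).Finite := PR.pts_spec_finite h hs
  have hDomFin : Dom.Finite := hDomEq ▸ ((hsfin.diff).diff)
  have hDomCard : Dom.ncard = n - 1 := by
    rw [hDomEq, Set.ncard_diff_singleton_of_mem
      (show p ∈ PR.pts R s \ {R.D} from ⟨hp.1, fun e => hpD (Set.mem_singleton_iff.1 e)⟩),
      Set.ncard_diff_singleton_of_mem (show R.D ∈ PR.pts R s from hs),
      PR.card_pts_spec h hs]
    omega
  -- membership
  have hmem : ∀ q ∈ Dom, F q ∈ Planes := by
    rintro q ⟨hqs, hqD, hql⟩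
    exact ⟨PR.constructed_isSubplane hl hs hqs hqD hql h,
      PR.constructed_isFull hl hs hqs hqD hql h,
      PR.l_mem_Lset hl hs hqs hqD hql h⟩
  -- surjectivity
  have hsurj : ∀ π ∈ Planes, ∃ q ∈ Dom, F q = π := by
    rintro π ⟨hsp, hfull, hlL⟩
    obtain ⟨z, hzP, hzs, hzD, hzl⟩ := PR.pi_trace_nonempty hl hs hsp hfull hlL h
    have hP := PR.pi_eq_P hl hs hsp hfull hlL h hzs hzD hzl hzP
    have hL := PR.pi_eq_L hl hs hsp hfull hlL h hzs hzD hzl hzP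
    exact ⟨z, ⟨hzs, hzD, hzl⟩, Prod.ext hP.symm hL.symm⟩
  -- fibers
  have hfiber : ∀ π ∈ Planes, {q | q ∈ Dom ∧ F q = π}.ncard = m - 1 := by
    intro π hπ
    obtain ⟨q0, hq0, hFq0⟩ := hsurj π hπ
    obtain ⟨hq0s, hq0D, hq0l⟩ := hq0
    have hsp0 := PR.constructed_isSubplane hl hs hq0s hq0D hq0l h
    have hfull0 := PR.constructed_isFull hl hs hq0s hq0D hq0l h
    have hlL0 := PR.l_mem_Lset hl hs hq0s hq0D hq0l h
    have hfibeq : {q | q ∈ Dom ∧ F q = π} =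
        {x | R.Incid x s ∧ x ≠ R.D ∧ ¬R.Incid x l ∧ x ∈ PR.Pset R l s q0} := by
      ext x
      simp only [Set.mem_setOf_eq]
      constructor
      · rintro ⟨⟨hxs, hxD, hxl⟩, hFx⟩
        have : PR.Pset R l s x = π.1 := congrArg Prod.fst hFx
        have hxπ : x ∈ π.1 := this ▸ PR.Pset_q
        have : π.1 = PR.Pset R l s q0 := congrArg Prod.fst hFq0.symm
        exact ⟨hxs, hxD, hxl, this ▸ hxπ⟩
      · rintro ⟨hxs, hxD, hxl, hxP0⟩
        have hP := PR.pi_eq_P hl hs hsp0 hfull0 hlL0 h hxs hxD hxl hxP0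
        have hL := PR.pi_eq_L hl hs hsp0 hfull0 hlL0 h hxs hxD hxl hxP0
        refine ⟨⟨hxs, hxD, hxl⟩, ?_⟩
        rw [← hFq0]
        exact Prod.ext hP.symm hL.symm
    rw [hfibeq]
    exact PR.trace_card hl hs hq0s hq0D hq0l h
  -- Planes is the image of Dom
  have himg : F '' Dom = Planes := by
    apply Set.Subset.antisymm
    · rintro π ⟨q, hq, rfl⟩
      exact hmem q hq
    · intro π hπ
      obtain ⟨q, hq, hFq⟩ := hsurj π hπ
      exact ⟨q, hq, hFq⟩
  have hPlanesFin : Planes.Finite := himg ▸ hDomFin.image F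
  -- counting via fiberwise sum
  set sD := hDomFin.toFinset with hsD
  set sP := hPlanesFin.toFinset with hsP
  have hmem' : ∀ q ∈ sD, F q ∈ sP := by
    intro q hq
    rw [Set.Finite.mem_toFinset] at hq ⊢
    exact hmem q hq
  have hsum := Finset.card_eq_sum_card_fiberwise hmem'
  have hterm : ∀ π ∈ sP, (sD.filter (fun q => F q = π)).card = m - 1 := by
    intro π hπ
    rw [Set.Finite.mem_toFinset] at hπ
    have hset : (↑(sD.filter (fun q => F q = π)) : Set Point) = {q | q ∈ Dom ∧ F q = π} := by
      ext x
      simp only [Finset.coe_filter, Set.mem_setOf_eq, Set.Finite.mem_toFinset, hsD]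
    have := hfiber π hπ
    rw [← hset, Set.ncard_coe_finset] at this
    exact this
  have hDcard : sD.card = n - 1 := by
    rw [← Set.ncard_eq_toFinset_card Dom hDomFin]
    exact hDomCard
  have hPcard : Planes.ncard = sP.card := Set.ncard_eq_toFinset_card Planes hPlanesFin
  have hkey : n - 1 = sP.card * (m - 1) := by
    rw [← hDcard, hsum, Finset.sum_congr rfl hterm, Finset.sum_const, smul_eq_mul]
  have hm := PR.two_le_m h
  constructor
  · exact ⟨sP.card, by rw [hkey, Nat.mul_comm]⟩
  · rw [hPcard, hkey, Nat.mul_div_cancel _ (by omega : 0 < m - 1)]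

/-- In a finite projective rectangle of order (m,n), each ordinary line lies in
exactly (n-1)/(m-1) full subplanes; in particular m-1 divides n-1. -/
theorem stmt_15 {Point Line : Type} (R : ProjRect Point Line) (m n : ℕ)
    (h : R.HasOrder m n) (l : Line) (hl : ¬R.Incid R.D l) :
    (m - 1) ∣ (n - 1) ∧
    Set.ncard {π : Set Point × Set Line |
      R.IsSubplane π.1 π.2 ∧ R.IsFull π.1 π.2 ∧ l ∈ π.2} = (n - 1) / (m - 1) := by
  exact stmt_15' R m n h l hl
end
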